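/- arXiv:1911.03041 — 6 statements merged into one kernel-verified Lean document; each statement's English description precedes it below -/
import Mathlib

section
/- Let E₁, E₂ ⊂ ℝⁿ be linear subspaces with E₁ + E₂ = ℝⁿ, let θ be the angle between E₁ and E₂, and set I = E₁ ∩ E₂, L₁ = I⊥ ∩ E₁, L₂ = I⊥ ∩ E₂. If x = l₁ + v + l₂ with l₁ ∈ L₁, v ∈ I, l₂ ∈ L₂, then |l₁| ≤ dist(x, E₂)/sin θ and |l₂| ≤ dist(x, E₁)/sin θ. -/
open InnerProductGeometry RealInnerProductSpace

variable {V : Type*} [NormedAddCommGroup V] [InnerProductSpace ℝ V]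

lemma my_norm_mul_sin_le (l u : V) (hu : u ≠ 0) :
    ‖l‖ * Real.sin (angle l u) ≤ ‖l - u‖ := by
  have h1 := sin_angle_mul_norm_mul_norm l u
  rw [real_inner_self_eq_norm_sq, real_inner_self_eq_norm_sq] at h1
  have hs : 0 ≤ Real.sin (angle l u) :=
    Real.sin_nonneg_of_nonneg_of_le_pi (angle_nonneg l u) (angle_le_pi l u)
  have hnu : 0 < ‖u‖ := norm_pos_iff.2 hu
  have hcs := abs_real_inner_le_norm l u
  have hcs' : ⟪l, u⟫ ^ 2 ≤ ‖l‖ ^ 2 * ‖u‖ ^ 2 := by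
    nlinarith [abs_nonneg ⟪l, u⟫, sq_abs ⟪l, u⟫, norm_nonneg l, norm_nonneg u]
  have hsq : (‖l‖ * Real.sin (angle l u))^2 * ‖u‖^2 ≤ ‖l - u‖^2 * ‖u‖^2 := by
    have h2 : (Real.sin (angle l u) * (‖l‖ * ‖u‖))^2 =
        ‖l‖^2 * ‖u‖^2 - ⟪l, u⟫^2 := by
      rw [h1, Real.sq_sqrt (by nlinarith)]; ring
    have h3 : ‖l - u‖^2 = ‖l‖^2 - 2 * ⟪l, u⟫ + ‖u‖^2 := by
      rw [@norm_sub_sq_real]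
    nlinarith [sq_nonneg (‖u‖^2 - ⟪l, u⟫)]
  have hsq' : (‖l‖ * Real.sin (angle l u))^2 ≤ ‖l - u‖^2 :=
    le_of_mul_le_mul_right hsq (by positivity)
  have h0 : 0 ≤ ‖l‖ * Real.sin (angle l u) := by positivity
  exact (pow_le_pow_iff_left₀ h0 (norm_nonneg _) two_ne_zero).1 hsq'

lemma my_sin_le {θ a : ℝ} (hθ0 : 0 ≤ θ) (h1 : θ ≤ a) (h2 : θ ≤ Real.pi - a) :
    Real.sin θ ≤ Real.sin a := by
  rcases le_or_gt a (Real.pi / 2) with h | h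
  · exact Real.strictMonoOn_sin.monotoneOn ⟨by linarith [Real.pi_pos], by linarith⟩
      ⟨by linarith [Real.pi_pos], h⟩ h1
  · rw [show Real.sin a = Real.sin (Real.pi - a) from (Real.sin_pi_sub a).symm]
    exact Real.strictMonoOn_sin.monotoneOn ⟨by linarith [Real.pi_pos], by linarith⟩
      ⟨by linarith [Real.pi_pos], by linarith⟩ h2

lemma my_core (I L E : Submodule ℝ V) [CompleteSpace I] (hIE : I ≤ E)
    (hL : L = Iᗮ ⊓ E) {l : V} (hl : l ∈ Iᗮ) {θ : ℝ} (hθ1 : Real.sin θ ≤ 1)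
    (hθ0 : 0 ≤ Real.sin θ)
    (hbound : ∀ u ∈ L, u ≠ 0 → Real.sin θ ≤ Real.sin (angle l u))
    {e : V} (he : e ∈ E) : ‖l‖ * Real.sin θ ≤ ‖l - e‖ := by
  have hdec : I ⊔ (Iᗮ ⊓ E) = E := Submodule.sup_orthogonal_inf_of_hasOrthogonalProjection hIE
  have he' : e ∈ I ⊔ L := by rw [hL, hdec]; exact he
  obtain ⟨w, hw, u, hu, rfl⟩ := Submodule.mem_sup.1 he'
  have hu' : u ∈ Iᗮ := by rw [hL] at hu; exact hu.1
  have hlu : l - u ∈ Iᗮ := Submodule.sub_mem _ hl hu'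
  have horth : ⟪l - u, w⟫ = 0 := by
    have := (Submodule.mem_orthogonal I (l - u)).1 hlu w hw
    rwa [real_inner_comm] at this
  have hpyth : ‖l - u‖ ≤ ‖l - (w + u)‖ := by
    have heq : l - (w + u) = (l - u) - w := by abel
    have h2 : ‖l - (w + u)‖^2 = ‖l - u‖^2 + ‖w‖^2 := by
      rw [heq, @norm_sub_sq_real, horth]; ring
    have h3 : ‖l - u‖^2 ≤ ‖l - (w + u)‖^2 := by nlinarith [sq_nonneg ‖w‖]
    exact (pow_le_pow_iff_left₀ (norm_nonneg _) (norm_nonneg _) two_ne_zero).1 h3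
  rcases eq_or_ne u 0 with rfl | hu0
  · calc ‖l‖ * Real.sin θ ≤ ‖l‖ * 1 :=
          mul_le_mul_of_nonneg_left hθ1 (norm_nonneg l)
      _ = ‖l - 0‖ := by simp
      _ ≤ _ := hpyth
  · calc ‖l‖ * Real.sin θ ≤ ‖l‖ * Real.sin (angle l u) :=
          mul_le_mul_of_nonneg_left (hbound u hu hu0) (norm_nonneg l)
      _ ≤ ‖l - u‖ := my_norm_mul_sin_le l u hu0
      _ ≤ _ := hpyth

/-- If `E₁ + E₂ = ℝⁿ`, `θ` is the angle between `E₁` and `E₂`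
(the infimum of angles between nonzero vectors of `L₁ = I^⊥ ⊓ E₁` and `L₂ = I^⊥ ⊓ E₂`,
where `I = E₁ ⊓ E₂`), and `x = l₁ + v + l₂` with `l₁ ∈ L₁`, `v ∈ I`, `l₂ ∈ L₂`, then
`‖l₁‖ ≤ dist(x, E₂) / sin θ` and `‖l₂‖ ≤ dist(x, E₁) / sin θ`. -/
theorem stmt_1 {n : ℕ}
    (E₁ E₂ : Submodule ℝ (EuclideanSpace ℝ (Fin n)))
    (hsum : E₁ ⊔ E₂ = ⊤)
    (I : Submodule ℝ (EuclideanSpace ℝ (Fin n))) (hI : I = E₁ ⊓ E₂)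
    (L₁ L₂ : Submodule ℝ (EuclideanSpace ℝ (Fin n)))
    (hL₁ : L₁ = Iᗮ ⊓ E₁) (hL₂ : L₂ = Iᗮ ⊓ E₂)
    (θ : ℝ)
    (hθ : IsGLB {a : ℝ | ∃ u₁ ∈ L₁, u₁ ≠ 0 ∧ ∃ u₂ ∈ L₂, u₂ ≠ 0 ∧
            a = InnerProductGeometry.angle u₁ u₂} θ)
    (x l₁ v l₂ : EuclideanSpace ℝ (Fin n))
    (hl₁ : l₁ ∈ L₁) (hv : v ∈ I) (hl₂ : l₂ ∈ L₂)
    (hx : x = l₁ + v + l₂) :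
    ‖l₁‖ ≤ Metric.infDist x (E₂ : Set (EuclideanSpace ℝ (Fin n))) / Real.sin θ ∧
    ‖l₂‖ ≤ Metric.infDist x (E₁ : Set (EuclideanSpace ℝ (Fin n))) / Real.sin θ := by
  set S := {a : ℝ | ∃ u₁ ∈ L₁, u₁ ≠ 0 ∧ ∃ u₂ ∈ L₂, u₂ ≠ 0 ∧
      a = InnerProductGeometry.angle u₁ u₂} with hS
  -- S is nonempty
  have hSne : S.Nonempty := by
    by_contra h
    rw [Set.not_nonempty_iff_eq_empty] at h
    have h1 : θ + 1 ∈ lowerBounds S := by rw [h]; intro a ha; exact absurd ha (Set.notMem_empty a)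
    linarith [hθ.2 h1]
  -- θ is a lower bound
  have hmem : ∀ u₁ ∈ L₁, u₁ ≠ 0 → ∀ u₂ ∈ L₂, u₂ ≠ 0 → θ ≤ angle u₁ u₂ := by
    intro u₁ h₁ h₁0 u₂ h₂ h₂0
    exact hθ.1 ⟨u₁, h₁, h₁0, u₂, h₂, h₂0, rfl⟩
  have hθ0 : 0 ≤ θ := by
    apply hθ.2
    rintro a ⟨u₁, -, -, u₂, -, -, rfl⟩
    exact angle_nonneg u₁ u₂
  -- θ ≤ π/2
  obtain ⟨a0, w₁, hw₁, hw₁0, w₂, hw₂, hw₂0, ha0⟩ := hSne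
  have hθpi2 : θ ≤ Real.pi / 2 := by
    have h1 := hmem w₁ hw₁ hw₁0 w₂ hw₂ hw₂0
    have h2 := hmem w₁ hw₁ hw₁0 (-w₂) (L₂.neg_mem hw₂) (neg_ne_zero.2 hw₂0)
    rw [angle_neg_right] at h2
    linarith
  -- L₁ ∩ L₂ = 0 trick : a vector in both L₁ and L₂ is zero
  have hcap : ∀ b : EuclideanSpace ℝ (Fin n), b ∈ L₁ → b ∈ L₂ → b = 0 := by
    intro b hb1 hb2
    rw [hL₁] at hb1; rw [hL₂] at hb2
    have hbI : b ∈ I := by rw [hI]; exact ⟨hb1.2, hb2.2⟩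
    have := (Submodule.mem_orthogonal I b).1 hb1.1 b hbI
    exact inner_self_eq_zero.1 this
  -- θ > 0 via compactness
  have hθpos : 0 < θ := by
    set S₁ : Set (EuclideanSpace ℝ (Fin n)) := Metric.sphere 0 1 ∩ (L₁ : Set _) with hS₁
    set S₂ : Set (EuclideanSpace ℝ (Fin n)) := Metric.sphere 0 1 ∩ (L₂ : Set _) with hS₂
    have hnorm1 : ∀ y : EuclideanSpace ℝ (Fin n), y ≠ 0 → ‖y‖⁻¹ • y ∈ Metric.sphere (0 : EuclideanSpace ℝ (Fin n)) 1 := by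
      intro y hy
      have : ‖y‖ ≠ 0 := norm_ne_zero_iff.2 hy
      simp [norm_smul, abs_of_nonneg (inv_nonneg.2 (norm_nonneg y)), inv_mul_cancel₀ this]
    have hK : IsCompact (S₁ ×ˢ S₂) := by
      apply IsCompact.prod
      · exact (isCompact_sphere _ _).inter_right (Submodule.closed_of_finiteDimensional L₁)
      · exact (isCompact_sphere _ _).inter_right (Submodule.closed_of_finiteDimensional L₂)
    have hKne : (S₁ ×ˢ S₂).Nonempty := by
      refine ⟨(‖w₁‖⁻¹ • w₁, ‖w₂‖⁻¹ • w₂), ⟨hnorm1 w₁ hw₁0, L₁.smul_mem _ hw₁⟩,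
        ⟨hnorm1 w₂ hw₂0, L₂.smul_mem _ hw₂⟩⟩
    have hcont : ContinuousOn (fun p : EuclideanSpace ℝ (Fin n) × EuclideanSpace ℝ (Fin n) =>
        angle p.1 p.2) (S₁ ×ˢ S₂) := by
      intro p hp
      have h1 : p.1 ≠ 0 := by
        have : ‖p.1‖ = 1 := by simpa using mem_sphere_iff_norm.1 hp.1.1
        intro h; rw [h] at this; simp at this
      have h2 : p.2 ≠ 0 := by
        have : ‖p.2‖ = 1 := by simpa using mem_sphere_iff_norm.1 hp.2.1
        intro h; rw [h] at this; simp at this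
      exact (continuousAt_angle h1 h2).continuousWithinAt
    obtain ⟨⟨a, b⟩, hab, hmin⟩ := hK.exists_isMinOn hKne hcont
    have ha0' : a ≠ 0 := by
      have : ‖a‖ = 1 := by simpa using mem_sphere_iff_norm.1 hab.1.1
      intro h; rw [h] at this; simp at this
    have hb0' : b ≠ 0 := by
      have : ‖b‖ = 1 := by simpa using mem_sphere_iff_norm.1 hab.2.1
      intro h; rw [h] at this; simp at this
    have hmlb : angle a b ∈ lowerBounds S := by
      rintro r ⟨c₁, hc₁, hc₁0, c₂, hc₂, hc₂0, rfl⟩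
      have hinv1 : (0:ℝ) < ‖c₁‖⁻¹ := inv_pos.2 (norm_pos_iff.2 hc₁0)
      have hinv2 : (0:ℝ) < ‖c₂‖⁻¹ := inv_pos.2 (norm_pos_iff.2 hc₂0)
      have heq : angle c₁ c₂ = angle (‖c₁‖⁻¹ • c₁) (‖c₂‖⁻¹ • c₂) := by
        rw [angle_smul_left_of_pos _ _ hinv1, angle_smul_right_of_pos _ _ hinv2]
      rw [heq]
      exact isMinOn_iff.1 hmin (‖c₁‖⁻¹ • c₁, ‖c₂‖⁻¹ • c₂)
        ⟨⟨hnorm1 c₁ hc₁0, L₁.smul_mem _ hc₁⟩, ⟨hnorm1 c₂ hc₂0, L₂.smul_mem _ hc₂⟩⟩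
    have hmθ : angle a b ≤ θ := hθ.2 hmlb
    have hmne : angle a b ≠ 0 := by
      intro h0
      obtain ⟨-, r, hr, hba⟩ := angle_eq_zero_iff.1 h0
      have hbL₁ : b ∈ L₁ := by rw [hba]; exact L₁.smul_mem _ hab.1.2
      exact hb0' (hcap b hbL₁ hab.2.2)
    have := lt_of_le_of_ne (angle_nonneg a b) (Ne.symm hmne)
    linarith
  have hsinpos : 0 < Real.sin θ :=
    Real.sin_pos_of_pos_of_lt_pi hθpos (by linarith [Real.pi_pos])
  -- unpack memberships
  have hl₁' := hl₁; rw [hL₁] at hl₁'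
  have hl₂' := hl₂; rw [hL₂] at hl₂'
  have hIleE₁ : I ≤ E₁ := by rw [hI]; exact inf_le_left
  have hIleE₂ : I ≤ E₂ := by rw [hI]; exact inf_le_right
  -- sin bounds
  have hbound₁ : ∀ u ∈ L₂, u ≠ 0 → Real.sin θ ≤ Real.sin (angle l₁ u) := by
    intro u hu hu0
    rcases eq_or_ne l₁ 0 with h | h
    · rw [h, angle_zero_left, Real.sin_pi_div_two]; exact Real.sin_le_one θ
    · have h1 := hmem l₁ hl₁ h u hu hu0
      have h2 := hmem l₁ hl₁ h (-u) (L₂.neg_mem hu) (neg_ne_zero.2 hu0)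
      rw [angle_neg_right] at h2
      exact my_sin_le hθ0 h1 h2
  have hbound₂ : ∀ u ∈ L₁, u ≠ 0 → Real.sin θ ≤ Real.sin (angle l₂ u) := by
    intro u hu hu0
    rcases eq_or_ne l₂ 0 with h | h
    · rw [h, angle_zero_left, Real.sin_pi_div_two]; exact Real.sin_le_one θ
    · have h1 := hmem u hu hu0 l₂ hl₂ h
      have h2 := hmem (-u) (L₁.neg_mem hu) (neg_ne_zero.2 hu0) l₂ hl₂ h
      rw [angle_comm] at h1
      rw [angle_neg_left, angle_comm] at h2
      exact my_sin_le hθ0 h1 h2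
  constructor
  · rw [le_div_iff₀ hsinpos]
    rw [Metric.infDist_eq_iInf]
    have : Nonempty (E₂ : Set (EuclideanSpace ℝ (Fin n))) := ⟨⟨0, E₂.zero_mem⟩⟩
    apply le_ciInf
    rintro ⟨y, hy⟩
    rw [dist_eq_norm]
    have hxy : x - y = l₁ - (y - v - l₂) := by rw [hx]; abel
    rw [hxy]
    exact my_core I L₂ E₂ hIleE₂ hL₂ hl₁'.1 (Real.sin_le_one θ) hsinpos.le hbound₁
      (E₂.sub_mem (E₂.sub_mem hy (hIleE₂ hv)) hl₂'.2)
  · rw [le_div_iff₀ hsinpos]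
    rw [Metric.infDist_eq_iInf]
    have : Nonempty (E₁ : Set (EuclideanSpace ℝ (Fin n))) := ⟨⟨0, E₁.zero_mem⟩⟩
    apply le_ciInf
    rintro ⟨y, hy⟩
    rw [dist_eq_norm]
    have hxy : x - y = l₂ - (y - v - l₁) := by rw [hx]; abel
    rw [hxy]
    exact my_core I L₁ E₁ hIleE₁ hL₁ hl₂'.1 (Real.sin_le_one θ) hsinpos.le hbound₂
      (E₁.sub_mem (E₁.sub_mem hy (hIleE₁ hv)) hl₁'.2)
end

section
/- Perturbation stability of disjointness: let T be a finite family, φ a map on a neighborhood of ⋃_{Q∈T} Q into ℝˡ, and L, τ, ρ > 0. Suppose for each Q ∈ T there exists c_Q ∈ ℝˡ with B_{L⁻¹ρ}(c_Q) ⊂ φ(Q) ⊂ B_{Lρ}(c_Q), and φ(Q₁) ∩ φ(Q₂) = ∅ for distinct Q₁, Q₂ ∈ T. Then for any ψ defined on a neighborhood of ⋃_{Q∈T} Q with sup-distance ‖φ − ψ‖ < τρ, there exists T' ⊂ T with #T' ≥ [3L(L+τ)]^{-l} · #T and ψ(Q₁) ∩ ψ(Q₂) = ∅ for all distinct Q₁,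 Q₂ ∈ T'. -/
open MeasureTheory Metric

private lemma stmt8_ball_count {l : ℕ} (hl : 0 < l) {ι : Type*} (s : Finset ι)
    (c : ι → EuclideanSpace ℝ (Fin l))
    (x : EuclideanSpace ℝ (Fin l)) (r R : ℝ) (hr : 0 < r) (hR : 0 ≤ R)
    (hd : ∀ i ∈ s, ∀ j ∈ s, i ≠ j → ball (c i) r ∩ ball (c j) r = ∅)
    (hsub : ∀ i ∈ s, ball (c i) r ⊆ ball x R) :
    (s.card : ℝ) * r ^ l ≤ R ^ l := by
  haveI : Nonempty (Fin l) := ⟨⟨0, hl⟩⟩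
  have h1 : ∑ i ∈ s, volume (ball (c i) r) = volume (⋃ i ∈ s, ball (c i) r) := by
    refine (measure_biUnion_finset ?_ (fun i _ => measurableSet_ball)).symm
    intro i hi j hj hij
    exact Set.disjoint_iff_inter_eq_empty.2 (hd i hi j hj hij)
  have hB : volume (ball (0 : EuclideanSpace ℝ (Fin l)) 1) ≠ 0 :=
    (measure_ball_pos volume _ one_pos).ne'
  have hB' : volume (ball (0 : EuclideanSpace ℝ (Fin l)) 1) ≠ ⊤ :=
    measure_ball_lt_top.ne
  have hball : ∀ y : EuclideanSpace ℝ (Fin l), ∀ t : ℝ, 0 ≤ t →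
      volume (ball y t) = ENNReal.ofReal (t ^ l) * volume (ball (0 : EuclideanSpace ℝ (Fin l)) 1) := by
    intro y t ht
    rw [Measure.addHaar_ball volume y ht, finrank_euclideanSpace_fin]
  have h2 : (s.card : ENNReal) * (ENNReal.ofReal (r ^ l) * volume (ball (0 : EuclideanSpace ℝ (Fin l)) 1))
      ≤ ENNReal.ofReal (R ^ l) * volume (ball (0 : EuclideanSpace ℝ (Fin l)) 1) := by
    calc (s.card : ENNReal) * (ENNReal.ofReal (r ^ l) * volume (ball (0 : EuclideanSpace ℝ (Fin l)) 1))
        = ∑ i ∈ s, volume (ball (c i) r) := by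
          simp [hball _ r hr.le, Finset.sum_const, nsmul_eq_mul]
      _ = volume (⋃ i ∈ s, ball (c i) r) := h1
      _ ≤ volume (ball x R) := measure_mono (Set.iUnion₂_subset hsub)
      _ = _ := hball x R hR
  rw [← mul_assoc, ENNReal.mul_le_mul_iff_left hB hB', ← ENNReal.ofReal_natCast,
    ← ENNReal.ofReal_mul (by positivity)] at h2
  exact (ENNReal.ofReal_le_ofReal_iff (by positivity)).1 h2

/-- Perturbation stability of disjointness: let `T` be a finite family of
subsets of `ℂⁿ`, `φ` a map into `ℝˡ` such that for each `Q ∈ T` there is `c_Q` with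
`B(c_Q, L⁻¹ρ) ⊆ φ(Q) ⊆ B(c_Q, Lρ)`, the images `φ(Q)` pairwise disjoint.  Then for any
`ψ` with `‖φ − ψ‖ < τρ` on `⋃_{Q∈T} Q` there is `T' ⊆ T` with
`#T' ≥ (3L(L+τ))^{-l}·#T` and the `ψ`-images of members of `T'` pairwise disjoint. -/
theorem stmt_8 {nn l : ℕ}
    (T : Finset (Set (EuclideanSpace ℂ (Fin nn))))
    (φ ψ : EuclideanSpace ℂ (Fin nn) → EuclideanSpace ℝ (Fin l))
    (L τ ρ : ℝ) (hL : 0 < L) (hτ : 0 < τ) (hρ : 0 < ρ)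
    (hball : ∀ Q ∈ T, ∃ c : EuclideanSpace ℝ (Fin l),
      Metric.ball c (L⁻¹ * ρ) ⊆ φ '' Q ∧ φ '' Q ⊆ Metric.ball c (L * ρ))
    (hdisj : ∀ Q₁ ∈ T, ∀ Q₂ ∈ T, Q₁ ≠ Q₂ → (φ '' Q₁) ∩ (φ '' Q₂) = ∅)
    (hclose : ∀ Q ∈ T, ∀ x ∈ Q, dist (φ x) (ψ x) < τ * ρ) :
    ∃ T' ⊆ T, (3 * L * (L + τ)) ^ (-(l : ℝ)) * (T.card : ℝ) ≤ (T'.card : ℝ) ∧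
      ∀ Q₁ ∈ T', ∀ Q₂ ∈ T', Q₁ ≠ Q₂ → (ψ '' Q₁) ∩ (ψ '' Q₂) = ∅ := by
  classical
  have hr0 : (0:ℝ) < L⁻¹ * ρ := by positivity
  have hx0 : (0:ℝ) < 3 * L * (L + τ) := by positivity
  choose! c hc1 hc2 using hball
  -- each member of T is nonempty
  have hQne : ∀ Q ∈ T, Q.Nonempty := by
    intro Q hQ
    obtain ⟨a, ha, -⟩ := hc1 Q hQ (mem_ball_self hr0)
    exact ⟨a, ha⟩
  -- trivial cases
  rcases T.eq_empty_or_nonempty with rfl | hTne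
  · exact ⟨∅, Finset.Subset.refl _, by simp, by simp⟩
  rcases Nat.eq_zero_or_pos l with rfl | hl
  · -- dimension 0 : T has at most one element
    have hcard : T.card ≤ 1 := by
      rw [Finset.card_le_one]
      intro Q₁ h₁ Q₂ h₂
      by_contra hne
      have h := hdisj Q₁ h₁ Q₂ h₂ hne
      obtain ⟨a₁, ha₁⟩ := hQne Q₁ h₁
      obtain ⟨a₂, ha₂⟩ := hQne Q₂ h₂
      have : φ a₁ = φ a₂ := Subsingleton.elim _ _
      have : φ a₁ ∈ (φ '' Q₁) ∩ (φ '' Q₂) :=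
        ⟨⟨a₁, ha₁, rfl⟩, ⟨a₂, ha₂, this.symm⟩⟩
      simp [h] at this
    refine ⟨T, Finset.Subset.refl _, by norm_num, ?_⟩
    intro Q₁ h₁ Q₂ h₂ hne
    exact absurd (Finset.card_le_one.1 hcard Q₁ h₁ Q₂ h₂) hne
  -- main case : l ≥ 1 and T nonempty
  haveI : Nonempty (Fin l) := ⟨⟨0, hl⟩⟩
  -- L⁻¹ ≤ L
  have hL1 : L⁻¹ ≤ L := by
    by_contra hcon
    push_neg at hcon
    obtain ⟨Q₀, hQ₀⟩ := hTne
    set e : EuclideanSpace ℝ (Fin l) := EuclideanSpace.single ⟨0, hl⟩ (1:ℝ) with he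
    have hnorme : ‖e‖ = 1 := by simp [he, EuclideanSpace.norm_single]
    set p : EuclideanSpace ℝ (Fin l) := c Q₀ + (L * ρ) • e with hp
    have hdist : dist p (c Q₀) = L * ρ := by
      rw [hp, dist_eq_norm, add_sub_cancel_left, norm_smul, hnorme]
      rw [mul_one, Real.norm_of_nonneg (by positivity)]
    have hmem : p ∈ ball (c Q₀) (L⁻¹ * ρ) := by
      rw [mem_ball, hdist]
      exact mul_lt_mul_of_pos_right hcon hρ
    have := hc2 Q₀ hQ₀ (hc1 Q₀ hQ₀ hmem)
    rw [mem_ball, hdist] at this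
    exact lt_irrefl _ this
  have hLτ : L⁻¹ ≤ L + τ := hL1.trans (by linarith)
  -- ψ-image in the enlarged ball
  have hψball : ∀ Q ∈ T, ψ '' Q ⊆ ball (c Q) ((L + τ) * ρ) := by
    rintro Q hQ y ⟨a, ha, rfl⟩
    have h1 : dist (φ a) (c Q) < L * ρ := hc2 Q hQ ⟨a, ha, rfl⟩
    have h2 : dist (φ a) (ψ a) < τ * ρ := hclose Q hQ a ha
    have := (dist_triangle (ψ a) (φ a) (c Q))
    rw [mem_ball]
    rw [dist_comm] at h2
    nlinarith
  -- maximal disjoint subfamily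
  set P : Finset (Set (EuclideanSpace ℂ (Fin nn))) → Prop :=
    fun S => ∀ Q₁ ∈ S, ∀ Q₂ ∈ S, Q₁ ≠ Q₂ → (ψ '' Q₁) ∩ (ψ '' Q₂) = ∅ with hP
  have hne : (T.powerset.filter P).Nonempty :=
    ⟨∅, by simp [hP]⟩
  obtain ⟨S, hSmem, hSmax'⟩ := Finset.exists_maximal hne
  have hSmax : ∀ x ∈ T.powerset.filter P, ¬ S < x := fun x hx hlt => hlt.not_ge (hSmax' hx hlt.le)
  rw [Finset.mem_filter, Finset.mem_powerset] at hSmem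
  obtain ⟨hST, hSP⟩ := hSmem
  refine ⟨S, hST, ?_, hSP⟩
  -- every Q ∈ T meets some member of S under ψ
  have hcover : ∀ Q ∈ T, ∃ Q' ∈ S, ((ψ '' Q) ∩ (ψ '' Q')).Nonempty := by
    intro Q hQ
    by_cases hQS : Q ∈ S
    · obtain ⟨a, ha⟩ := hQne Q hQ
      have hmem : ψ a ∈ (ψ '' Q) ∩ (ψ '' Q) :=
        ⟨Set.mem_image_of_mem _ ha, Set.mem_image_of_mem _ ha⟩
      exact ⟨Q, hQS, ⟨ψ a, hmem⟩⟩
    · by_contra hcon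
      push_neg at hcon
      have hins : insert Q S ∈ T.powerset.filter P := by
        rw [Finset.mem_filter, Finset.mem_powerset]
        refine ⟨Finset.insert_subset hQ hST, ?_⟩
        intro Q₁ h₁ Q₂ h₂ hne12
        rcases Finset.mem_insert.1 h₁ with h₁' | h₁'
        · rcases Finset.mem_insert.1 h₂ with h₂' | h₂'
          · exact absurd (h₁'.trans h₂'.symm) hne12
          · rw [h₁']; exact hcon Q₂ h₂'
        · rcases Finset.mem_insert.1 h₂ with h₂' | h₂'
          · rw [h₂', Set.inter_comm]; exact hcon Q₁ h₁'
          · exact hSP Q₁ h₁' Q₂ h₂' hne12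
      exact hSmax _ hins (Finset.ssubset_insert hQS)
  -- counting: each Q' ∈ S meets at most (3L(L+τ))^l members of T
  have hcount : ∀ Q' ∈ S, ((T.filter (fun Q => ((ψ '' Q) ∩ (ψ '' Q')).Nonempty)).card : ℝ)
      ≤ (3 * L * (L + τ)) ^ l := by
    intro Q' hQ'S
    have hQ'T : Q' ∈ T := hST hQ'S
    set F := T.filter (fun Q => ((ψ '' Q) ∩ (ψ '' Q')).Nonempty) with hF
    have key : (F.card : ℝ) * (L⁻¹ * ρ) ^ l ≤ (3 * (L + τ) * ρ) ^ l := by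
      apply stmt8_ball_count hl F c (c Q') _ _ hr0 (by positivity)
      · intro Q₁ h₁ Q₂ h₂ hne12
        rw [hF, Finset.mem_filter] at h₁ h₂
        have := hdisj Q₁ h₁.1 Q₂ h₂.1 hne12
        apply Set.eq_empty_of_subset_empty
        rw [← this]
        exact Set.inter_subset_inter (hc1 Q₁ h₁.1) (hc1 Q₂ h₂.1)
      · intro Q hQF
        rw [hF, Finset.mem_filter] at hQF
        obtain ⟨hQT, ⟨y, hy1, hy2⟩⟩ := hQF
        have d1 : dist y (c Q) < (L + τ) * ρ := hψball Q hQT hy1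
        have d2 : dist y (c Q') < (L + τ) * ρ := hψball Q' hQ'T hy2
        have dcc : dist (c Q) (c Q') < 2 * ((L + τ) * ρ) := by
          have := dist_triangle (c Q) y (c Q')
          rw [dist_comm (c Q) y] at this
          linarith
        intro z hz
        rw [mem_ball] at hz ⊢
        have := dist_triangle z (c Q) (c Q')
        have hLρ : L⁻¹ * ρ ≤ (L + τ) * ρ := mul_le_mul_of_nonneg_right hLτ hρ.le
        nlinarith
    have hratio : ((3 * (L + τ) * ρ) / (L⁻¹ * ρ)) ^ l = (3 * L * (L + τ)) ^ l := by
      congr 1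
      field_simp
    rw [← hratio, div_pow]
    rw [le_div_iff₀ (by positivity)]
    exact key
  -- combine
  have hTsub : T ⊆ S.biUnion (fun Q' => T.filter (fun Q => ((ψ '' Q) ∩ (ψ '' Q')).Nonempty)) := by
    intro Q hQ
    obtain ⟨Q', hQ'S, hmeet⟩ := hcover Q hQ
    exact Finset.mem_biUnion.2 ⟨Q', hQ'S, Finset.mem_filter.2 ⟨hQ, hmeet⟩⟩
  have hmain : (T.card : ℝ) ≤ (S.card : ℝ) * (3 * L * (L + τ)) ^ l := by
    calc (T.card : ℝ) ≤ ((S.biUnion (fun Q' => T.filter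
          (fun Q => ((ψ '' Q) ∩ (ψ '' Q')).Nonempty))).card : ℝ) := by
          exact_mod_cast Finset.card_le_card hTsub
      _ ≤ ∑ Q' ∈ S, ((T.filter (fun Q => ((ψ '' Q) ∩ (ψ '' Q')).Nonempty)).card : ℝ) := by
          exact_mod_cast Finset.card_biUnion_le
      _ ≤ ∑ Q' ∈ S, (3 * L * (L + τ)) ^ l := Finset.sum_le_sum hcount
      _ = (S.card : ℝ) * (3 * L * (L + τ)) ^ l := by
          rw [Finset.sum_const, nsmul_eq_mul]
  rw [Real.rpow_neg hx0.le, Real.rpow_natCast]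
  rw [inv_mul_le_iff₀ (by positivity)]
  linarith [hmain]
end

section
/- Neighborhood growth bound in J: for any bounded measurable set E ⊂ J = ℝ^{n-1} × 𝕋ⁿ and real numbers 0 < Δρ and δ > 0, the Haar measure of neighborhoods satisfies ν(V_{ρ+Δρ+Δ₁ρ}(E)) ≤ (1 + (1+Δ₁)/Δ)^{2n-1} · ν(V_{Δρ}(E)), where V_δ(E) denotes the δ-neighborhood of E in the invariant metric on J. -/
open MeasureTheory

instance : Fact (0 < 2 * Real.pi) := ⟨Real.two_pi_pos⟩

/-- The torus `𝕋 = ℝ/2πℤ`. -/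
noncomputable abbrev Torus : Type := AddCircle (2 * Real.pi)

open Metric Set
open scoped ENNReal NNReal

namespace Stmt12

variable (A : Set ℝ)

/-- distance to the closure of `A` -/
noncomputable def dd (t : ℝ) : ℝ := Metric.infDist t (closure A)

open Classical in
/-- a monotone choice of nearest point of `closure A` -/
noncomputable def pp (t : ℝ) : ℝ :=
  if t - dd A t ∈ closure A then t - dd A t else t + dd A t

/-- the contraction map -/
noncomputable def ff (c t : ℝ) : ℝ := c * t + (1 - c) * pp A t

variable {A}

theorem dd_nonneg (t : ℝ) : 0 ≤ dd A t := Metric.infDist_nonneg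

theorem dd_le {t y : ℝ} (hy : y ∈ closure A) : dd A t ≤ |t - y| := by
  simpa [dd, Real.dist_eq] using Metric.infDist_le_dist_of_mem hy

theorem dd_lip (s t : ℝ) : dd A t ≤ dd A s + |t - s| := by
  simpa [dd, Real.dist_eq] using Metric.infDist_le_infDist_add_dist (x := t) (y := s)
    (s := closure A)

theorem pp_spec (hA : A.Nonempty) (t : ℝ) :
    pp A t ∈ closure A ∧ |t - pp A t| = dd A t := by
  by_cases h : t - dd A t ∈ closure A
  · simp [pp, h, abs_of_nonneg (dd_nonneg t)]
  · obtain ⟨y, hy, hdy⟩ := isClosed_closure.exists_infDist_eq_dist hA.closure t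
    rw [Real.dist_eq] at hdy
    have : t - y = dd A t ∨ t - y = -dd A t := abs_eq (dd_nonneg t) |>.mp (by rw [← hdy]; rfl)
    rcases this with h1 | h1
    · exact absurd (by rw [show t - dd A t = y by linarith]; exact hy) h
    · have hy' : y = t + dd A t := by linarith
      rw [pp, if_neg h]
      constructor
      · rw [← hy']; exact hy
      · simp [abs_of_nonneg (dd_nonneg t)]

theorem pp_mono (hA : A.Nonempty) : Monotone (pp A) := by
  intro s t hst
  by_cases hs : s - dd A s ∈ closure A <;> by_cases ht : t - dd A t ∈ closure A
  · -- both left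
    rw [pp, if_pos hs, pp, if_pos ht]
    have := dd_lip (A := A) s t
    rw [abs_of_nonneg (by linarith)] at this
    linarith
  · -- s left, t right
    rw [pp, if_pos hs, pp, if_neg ht]
    have := dd_nonneg (A := A) s
    have := dd_nonneg (A := A) t
    linarith
  · -- s right, t left
    rw [pp, if_neg hs, pp, if_pos ht]
    -- z := s + dd A s ∈ closure A
    have hz : s + dd A s ∈ closure A := by
      rcases pp_spec hA s with ⟨hm, -⟩
      rw [pp, if_neg hs] at hm; exact hm
    set y := t - dd A t with hy
    by_cases hty : s + dd A s ≤ t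
    · -- d t ≤ t - z
      have h1 : dd A t ≤ t - (s + dd A s) := by
        have := dd_le (t := t) hz
        rwa [abs_of_nonneg (by linarith)] at this
      linarith
    · push_neg at hty
      have h1 : dd A t ≤ (s + dd A s) - t := by
        have := dd_le (t := t) hz
        rw [abs_of_nonpos (by linarith)] at this
        linarith
      -- y ≥ 2t - (s + d s) ≥ s - d s
      have hyge : s - dd A s ≤ y := by
        have := dd_nonneg (A := A) t
        simp only [hy]; linarith
      have hymem : y ∈ closure A := ht
      -- y cannot be ≤ s, else contradiction
      rcases le_or_gt y s with hys | hys
      · have h2 : dd A s ≤ s - y := by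
          have := dd_le (t := s) hymem
          rwa [abs_of_nonneg (by linarith)] at this
        have : y = s - dd A s := by linarith
        exact absurd (this ▸ hymem) hs
      · have h2 : dd A s ≤ y - s := by
          have := dd_le (t := s) hymem
          rw [abs_of_nonpos (by linarith)] at this
          linarith
        linarith
  · -- both right
    rw [pp, if_neg hs, pp, if_neg ht]
    have := dd_lip (A := A) t s
    rw [abs_of_nonpos (by linarith)] at this
    linarith

theorem ff_incr (hA : A.Nonempty) {c : ℝ} (hc1 : c ≤ 1) {s t : ℝ} (hst : s ≤ t) :
    c * (t - s) ≤ ff A c t - ff A c s := by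
  have := pp_mono hA hst
  simp only [ff]; nlinarith

theorem ff_mapsto (hA : A.Nonempty) {c r R : ℝ} (hc0 : 0 < c) (hcr : c * R ≤ r)
    {t : ℝ} (ht : t ∈ thickening R A) : ff A c t ∈ thickening r A := by
  have hdt : dd A t < R := by
    rw [mem_thickening_iff_infDist_lt hA] at ht
    rwa [dd, infDist_closure]
  rw [mem_thickening_iff_infDist_lt hA, ← infDist_closure]
  calc Metric.infDist (ff A c t) (closure A) ≤ dist (ff A c t) (pp A t) :=
        Metric.infDist_le_dist_of_mem (pp_spec hA t).1
    _ = c * |t - pp A t| := by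
        rw [Real.dist_eq]
        have : ff A c t - pp A t = c * (t - pp A t) := by unfold ff; ring
        rw [this, abs_mul, abs_of_pos hc0]
    _ = c * dd A t := by rw [(pp_spec hA t).2]
    _ < r := lt_of_lt_of_le (by nlinarith) hcr
theorem ff_dist_le (hA : A.Nonempty) {c : ℝ} (hc0 : 0 < c) (hc1 : c ≤ 1) (x y : ℝ) :
    dist x y ≤ (1 / c) * dist (ff A c x) (ff A c y) := by
  wlog hxy : x ≤ y generalizing x y
  · rw [dist_comm x y, dist_comm (ff A c x)]; exact this y x (by linarith)
  have h1 := ff_incr hA hc1 hxy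
  have h2 : ff A c y - ff A c x ≤ |ff A c y - ff A c x| := le_abs_self _
  rw [Real.dist_eq, Real.dist_eq, abs_of_nonpos (by linarith), abs_sub_comm]
  rw [div_mul_eq_mul_div, le_div_iff₀ hc0]
  nlinarith [abs_nonneg (ff A c y - ff A c x)]

theorem ff_injOn (hA : A.Nonempty) {c : ℝ} (hc0 : 0 < c) (hc1 : c ≤ 1) (S : Set ℝ) :
    InjOn (ff A c) S := by
  intro x _ y _ h
  have := ff_dist_le hA hc0 hc1 x y
  rw [h] at this
  simp only [dist_self, mul_zero] at this
  exact dist_le_zero.mp (le_trans this (le_of_eq rfl))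

/-- Core measure estimate via the contraction map. -/
theorem measure_le_core (hA : A.Nonempty) {c : ℝ} (hc0 : 0 < c) (hc1 : c ≤ 1) (S : Set ℝ) :
    (volume : Measure ℝ) S ≤ ENNReal.ofReal (1 / c) * μH[1] (ff A c '' S) := by
  set ψ := Function.invFunOn (ff A c) S with hψ
  have hinj : InjOn (ff A c) S := ff_injOn hA hc0 hc1 S
  have hlip : LipschitzOnWith (Real.toNNReal (1 / c)) ψ (ff A c '' S) := by
    apply LipschitzOnWith.of_dist_le'
    rintro u ⟨x, hx, rfl⟩ v ⟨y, hy, rfl⟩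
    have hu : ψ (ff A c x) = x := hinj.leftInvOn_invFunOn hx
    have hv : ψ (ff A c y) = y := hinj.leftInvOn_invFunOn hy
    rw [hu, hv]
    exact ff_dist_le hA hc0 hc1 x y
  have hsub : S ⊆ ψ '' (ff A c '' S) := by
    intro x hx
    exact ⟨ff A c x, mem_image_of_mem _ hx, hinj.leftInvOn_invFunOn hx⟩
  calc (volume : Measure ℝ) S = μH[1] S := by rw [MeasureTheory.hausdorffMeasure_real]
    _ ≤ μH[1] (ψ '' (ff A c '' S)) := measure_mono hsub
    _ ≤ (Real.toNNReal (1 / c) : ℝ≥0∞) ^ (1 : ℝ) * μH[1] (ff A c '' S) :=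
        hlip.hausdorffMeasure_image_le zero_le_one
    _ = ENNReal.ofReal (1 / c) * μH[1] (ff A c '' S) := by
        rw [ENNReal.rpow_one]; rfl

theorem oneDim_real (A : Set ℝ) {r R : ℝ} (hr : 0 < r) (hrR : r ≤ R) :
    volume (thickening R A) ≤ ENNReal.ofReal (R / r) * volume (thickening r A) := by
  rcases A.eq_empty_or_nonempty with rfl | hA
  · simp [thickening_empty]
  have hR : 0 < R := lt_of_lt_of_le hr hrR
  set c := r / R with hc
  have hc0 : 0 < c := div_pos hr hR
  have hc1 : c ≤ 1 := (div_le_one hR).mpr hrR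
  have hcr : c * R = r := div_mul_cancel₀ r (ne_of_gt hR)
  have him : ff A c '' thickening R A ⊆ thickening r A := by
    rintro u ⟨t, ht, rfl⟩
    exact ff_mapsto hA hc0 (le_of_eq hcr) ht
  calc volume (thickening R A)
      ≤ ENNReal.ofReal (1 / c) * μH[1] (ff A c '' thickening R A) :=
        measure_le_core hA hc0 hc1 _
    _ ≤ ENNReal.ofReal (1 / c) * μH[1] (thickening r A) := by
        exact mul_le_mul_right (measure_mono him) _
    _ = ENNReal.ofReal (R / r) * volume (thickening r A) := by
        rw [one_div_div, MeasureTheory.hausdorffMeasure_real]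


theorem dist_coe_le (x y : ℝ) : dist (x : Torus) (y : Torus) ≤ |x - y| := by
  rw [dist_eq_norm, ← QuotientAddGroup.mk_sub]
  simpa [Real.norm_eq_abs] using QuotientAddGroup.norm_mk_le_norm (S := AddSubgroup.zmultiples (2 * Real.pi)) (m := x - y)

theorem exists_lift_dist (t s : ℝ) :
    ∃ k : ℤ, |t - (s + k * (2 * Real.pi))| = dist (t : Torus) (s : Torus) := by
  refine ⟨round ((2 * Real.pi)⁻¹ * (t - s)), ?_⟩
  rw [dist_eq_norm, ← QuotientAddGroup.mk_sub, AddCircle.norm_eq]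
  ring_nf

theorem coe_add_zsmul_period (s : ℝ) (k : ℤ) :
    ((s + k * (2 * Real.pi) : ℝ) : Torus) = (s : Torus) := by
  rw [QuotientAddGroup.eq]
  exact ⟨-k, by push_cast [zsmul_eq_mul]; ring⟩

theorem preimage_thickening (B : Set Torus) (δ : ℝ) :
    (((↑) : ℝ → Torus) ⁻¹' (thickening δ B)) = thickening δ (((↑) : ℝ → Torus) ⁻¹' B) := by
  ext t
  simp only [mem_preimage, mem_thickening_iff]
  constructor
  · rintro ⟨b, hb, hd⟩
    obtain ⟨s, rfl⟩ := Quotient.exists_rep b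
    obtain ⟨k, hk⟩ := exists_lift_dist t s
    refine ⟨s + k * (2 * Real.pi), ?_, ?_⟩
    · show ((s + k * (2 * Real.pi) : ℝ) : Torus) ∈ B
      rw [coe_add_zsmul_period]; exact hb
    · rw [Real.dist_eq, hk]; exact hd
  · rintro ⟨s, hs, hd⟩
    exact ⟨(s : Torus), hs, lt_of_le_of_lt (by simpa [Real.dist_eq] using dist_coe_le t s) hd⟩

section Periodic

variable {Ab : Set ℝ} {T : ℝ}

theorem closure_per (hper : ∀ x : ℝ, x + T ∈ Ab ↔ x ∈ Ab) :
    ∀ x : ℝ, x + T ∈ closure Ab ↔ x ∈ closure Ab := by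
  have himg : (fun x => x + T) '' Ab = Ab := by
    ext u
    constructor
    · rintro ⟨y, hy, rfl⟩; exact (hper y).mpr hy
    · intro hu; exact ⟨u - T, (hper (u - T)).mp (by simpa using hu), by ring⟩
  have hcl : (fun x => x + T) '' closure Ab = closure Ab := by
    simpa [himg] using (Homeomorph.addRight T).image_closure Ab
  intro x
  constructor
  · intro hx
    rw [← hcl] at hx
    obtain ⟨y, hy, hyx⟩ := hx
    have : y = x := by simpa using hyx
    rwa [← this]
  · intro hx
    rw [← hcl]; exact ⟨x, hx, rfl⟩

theorem dd_per (hA : Ab.Nonempty) (hper : ∀ x : ℝ, x + T ∈ Ab ↔ x ∈ Ab) (t : ℝ) :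
    dd Ab (t + T) = dd Ab t := by
  have hc := closure_per hper
  apply le_antisymm
  · have hmem : pp Ab t + T ∈ closure Ab := (hc _).mpr (pp_spec hA t).1
    calc dd Ab (t + T) ≤ |(t + T) - (pp Ab t + T)| := dd_le hmem
      _ = |t - pp Ab t| := by ring_nf
      _ = dd Ab t := (pp_spec hA t).2
  · have hmem : pp Ab (t + T) - T ∈ closure Ab := by
      have := (pp_spec hA (t + T)).1
      have h2 := (hc (pp Ab (t + T) - T))
      simp only [sub_add_cancel] at h2
      exact h2.mp this
    calc dd Ab t ≤ |t - (pp Ab (t + T) - T)| := dd_le hmem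
      _ = |(t + T) - pp Ab (t + T)| := by ring_nf
      _ = dd Ab (t + T) := (pp_spec hA (t + T)).2

theorem pp_per (hA : Ab.Nonempty) (hper : ∀ x : ℝ, x + T ∈ Ab ↔ x ∈ Ab) (t : ℝ) :
    pp Ab (t + T) = pp Ab t + T := by
  have hc := closure_per hper
  have hdd := dd_per hA hper t
  have hcond : (t + T - dd Ab t ∈ closure Ab) ↔ (t - dd Ab t ∈ closure Ab) := by
    rw [show t + T - dd Ab t = (t - dd Ab t) + T by ring, hc]
  unfold pp
  rw [hdd]
  by_cases h : t - dd Ab t ∈ closure Ab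
  · rw [if_pos (hcond.mpr h), if_pos h]; ring
  · rw [if_neg (fun hh => h (hcond.mp hh)), if_neg h]; ring

theorem ff_per (hA : Ab.Nonempty) (hper : ∀ x : ℝ, x + T ∈ Ab ↔ x ∈ Ab) (c t : ℝ) :
    ff Ab c (t + T) = ff Ab c t + T := by
  unfold ff
  rw [pp_per hA hper]
  ring

end Periodic

theorem ff_mono (hA : A.Nonempty) {c : ℝ} (hc0 : 0 ≤ c) (hc1 : c ≤ 1) :
    Monotone (ff A c) := by
  intro s t hst
  have := pp_mono hA hst
  unfold ff
  nlinarith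

theorem oneDim_circle (B : Set Torus) {r R : ℝ} (hr : 0 < r) (hrR : r ≤ R) :
    volume (thickening R B) ≤ ENNReal.ofReal (R / r) * volume (thickening r B) := by
  rcases B.eq_empty_or_nonempty with rfl | hB
  · simp [thickening_empty]
  have hT : (0 : ℝ) < 2 * Real.pi := Real.two_pi_pos
  set T : ℝ := 2 * Real.pi with hTdef
  set Ab : Set ℝ := ((↑) : ℝ → Torus) ⁻¹' B with hAbdef
  have hAb : Ab.Nonempty := by
    obtain ⟨b, hb⟩ := hB
    obtain ⟨s, rfl⟩ := Quotient.exists_rep b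
    exact ⟨s, hb⟩
  have hper : ∀ x : ℝ, x + T ∈ Ab ↔ x ∈ Ab := by
    intro x
    show ((x + T : ℝ) : Torus) ∈ B ↔ ((x : ℝ) : Torus) ∈ B
    rw [AddCircle.coe_add_period]
  have hR : 0 < R := lt_of_lt_of_le hr hrR
  set c := r / R with hc
  have hc0 : 0 < c := div_pos hr hR
  have hc1 : c ≤ 1 := (div_le_one hR).mpr hrR
  have hcr : c * R = r := div_mul_cancel₀ r (ne_of_gt hR)
  set f0 := ff Ab c 0 with hf0
  have hmR : volume (thickening R B) = volume (thickening R Ab ∩ Ioc 0 (0 + T)) := by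
    rw [AddCircle.add_projection_respects_measure T 0 isOpen_thickening.measurableSet,
      preimage_thickening]
  have hmr : volume (thickening r B) = volume (thickening r Ab ∩ Ioc f0 (f0 + T)) := by
    rw [AddCircle.add_projection_respects_measure T f0 isOpen_thickening.measurableSet,
      preimage_thickening]
  have him : ff Ab c '' (thickening R Ab ∩ Ioc 0 (0 + T)) ⊆
      thickening r Ab ∩ Icc f0 (f0 + T) := by
    rintro u ⟨t, ⟨ht1, ht2⟩, rfl⟩
    refine ⟨ff_mapsto hAb hc0 (le_of_eq hcr) ht1, ?_, ?_⟩
    · exact ff_mono hAb (le_of_lt hc0) hc1 (le_of_lt (by simpa using ht2.1))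
    · calc ff Ab c t ≤ ff Ab c (0 + T) := ff_mono hAb (le_of_lt hc0) hc1 (by simpa using ht2.2)
        _ = f0 + T := ff_per hAb hper c 0
  calc volume (thickening R B) = volume (thickening R Ab ∩ Ioc 0 (0 + T)) := hmR
    _ ≤ ENNReal.ofReal (1 / c) * μH[1] (ff Ab c '' (thickening R Ab ∩ Ioc 0 (0 + T))) :=
        measure_le_core hAb hc0 hc1 _
    _ ≤ ENNReal.ofReal (1 / c) * μH[1] (thickening r Ab ∩ Icc f0 (f0 + T)) :=
        mul_le_mul_right (measure_mono him) _
    _ = ENNReal.ofReal (1 / c) * volume (thickening r Ab ∩ Icc f0 (f0 + T)) := by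
        rw [MeasureTheory.hausdorffMeasure_real]
    _ ≤ ENNReal.ofReal (1 / c) * volume (thickening r Ab ∩ Ioc f0 (f0 + T)) := by
        apply mul_le_mul_right
        have hsub : thickening r Ab ∩ Icc f0 (f0 + T) ⊆
            (thickening r Ab ∩ Ioc f0 (f0 + T)) ∪ {f0} := by
          rintro x ⟨hx1, hx2, hx3⟩
          rcases eq_or_lt_of_le hx2 with h | h
          · exact Or.inr (by simp [← h])
          · exact Or.inl ⟨hx1, h, hx3⟩
        calc volume (thickening r Ab ∩ Icc f0 (f0 + T)) ≤
            volume ((thickening r Ab ∩ Ioc f0 (f0 + T)) ∪ {f0}) := measure_mono hsub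
          _ ≤ volume (thickening r Ab ∩ Ioc f0 (f0 + T)) + volume {f0} := measure_union_le _ _
          _ = volume (thickening r Ab ∩ Ioc f0 (f0 + T)) := by simp
    _ = ENNReal.ofReal (R / r) * volume (thickening r B) := by
        rw [one_div_div, hmr]


variable {P Q : ℕ}

/-- anisotropic neighborhood -/
def VV (E : Set ((Fin P → ℝ) × (Fin Q → Torus))) (δ : Fin P → ℝ) (ε : Fin Q → ℝ) :
    Set ((Fin P → ℝ) × (Fin Q → Torus)) :=
  {x | ∃ e ∈ E, (∀ i, dist (x.1 i) (e.1 i) < δ i) ∧ (∀ j, dist (x.2 j) (e.2 j) < ε j)}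

theorem isOpen_VV (E : Set ((Fin P → ℝ) × (Fin Q → Torus))) (δ : Fin P → ℝ) (ε : Fin Q → ℝ) :
    IsOpen (VV E δ ε) := by
  have : VV E δ ε = ⋃ e ∈ E,
      (Set.pi univ fun i => ball (e.1 i) (δ i)) ×ˢ (Set.pi univ fun j => ball (e.2 j) (ε j)) := by
    ext x
    simp only [VV, mem_setOf_eq, mem_iUnion, mem_prod, mem_univ_pi, mem_ball, exists_prop]
  rw [this]
  exact isOpen_biUnion fun e _ =>
    ((isOpen_set_pi finite_univ fun i _ => isOpen_ball).prod
      (isOpen_set_pi finite_univ fun j _ => isOpen_ball))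

theorem thickening_eq_VV (E : Set ((Fin P → ℝ) × (Fin Q → Torus))) {s : ℝ} (hs : 0 < s) :
    thickening s E = VV E (fun _ => s) (fun _ => s) := by
  ext x
  rw [mem_thickening_iff]
  constructor
  · rintro ⟨e, he, hd⟩
    rw [Prod.dist_eq, max_lt_iff] at hd
    exact ⟨e, he, (dist_pi_lt_iff hs).mp hd.1, (dist_pi_lt_iff hs).mp hd.2⟩
  · rintro ⟨e, he, h1, h2⟩
    refine ⟨e, he, ?_⟩
    rw [Prod.dist_eq, max_lt_iff]
    exact ⟨(dist_pi_lt_iff hs).mpr h1, (dist_pi_lt_iff hs).mpr h2⟩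

theorem step_tor (E : Set ((Fin P → ℝ) × (Fin Q → Torus))) (δ : Fin P → ℝ) (ε : Fin Q → ℝ)
    (j₀ : Fin Q) {r R : ℝ} (hr : 0 < r) (hrR : r ≤ R) :
    volume (VV E δ (Function.update ε j₀ R)) ≤
      ENNReal.ofReal (R / r) * volume (VV E δ (Function.update ε j₀ r)) := by
  cases Q with
  | zero => exact j₀.elim0
  | succ Q' =>
  -- the slice set
  set Aset : (Fin P → ℝ) → (Fin Q' → Torus) → Set Torus := fun a z =>
    {w | ∃ e ∈ E, (∀ i, dist (a i) (e.1 i) < δ i) ∧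
      (∀ j, dist (z j) (e.2 (j₀.succAbove j)) < ε (j₀.succAbove j)) ∧ e.2 j₀ = w} with hAset
  have hslice : ∀ (s : ℝ) (a : Fin P → ℝ) (z : Fin Q' → Torus),
      {t : Torus | (a, j₀.insertNth t z) ∈ VV E δ (Function.update ε j₀ s)}
        = thickening s (Aset a z) := by
    intro s a z
    ext t
    rw [mem_thickening_iff]
    simp only [VV, mem_setOf_eq, hAset]
    constructor
    · rintro ⟨e, he, h1, h2⟩
      rw [Fin.forall_iff_succAbove j₀] at h2
      refine ⟨e.2 j₀, ⟨e, he, h1, ?_, rfl⟩, ?_⟩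
      · intro j
        have := h2.2 j
        rwa [Fin.insertNth_apply_succAbove, Function.update_of_ne (Fin.succAbove_ne j₀ j)] at this
      · have := h2.1
        rwa [Fin.insertNth_apply_same, Function.update_self] at this
    · rintro ⟨w, ⟨e, he, h1, h2, rfl⟩, hd⟩
      refine ⟨e, he, h1, ?_⟩
      rw [Fin.forall_iff_succAbove j₀]
      constructor
      · rwa [Fin.insertNth_apply_same, Function.update_self]
      · intro j
        rw [Fin.insertNth_apply_succAbove, Function.update_of_ne (Fin.succAbove_ne j₀ j)]
        exact h2 j
  -- Fubini decomposition
  have key : ∀ s : ℝ, volume (VV E δ (Function.update ε j₀ s)) =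
      ∫⁻ a : Fin P → ℝ, ∫⁻ z : Fin Q' → Torus, volume (thickening s (Aset a z)) := by
    intro s
    have hW : MeasurableSet (VV E δ (Function.update ε j₀ s)) :=
      (isOpen_VV E δ _).measurableSet
    rw [Measure.volume_eq_prod, Measure.prod_apply hW]
    congr 1
    funext a
    have hSb : MeasurableSet (Prod.mk a ⁻¹' VV E δ (Function.update ε j₀ s)) :=
      hW.preimage measurable_prodMk_left
    set e𝕋 := MeasurableEquiv.piFinSuccAbove (fun _ : Fin (Q' + 1) => Torus) j₀ with he𝕋
    have mp := measurePreserving_piFinSuccAbove (fun _ : Fin (Q' + 1) => (volume : Measure Torus)) j₀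
    have h1 : (volume : Measure (Fin (Q' + 1) → Torus))
          (Prod.mk a ⁻¹' VV E δ (Function.update ε j₀ s))
        = ((volume : Measure Torus).prod (Measure.pi fun _ => (volume : Measure Torus)))
          (e𝕋.symm ⁻¹' (Prod.mk a ⁻¹' VV E δ (Function.update ε j₀ s))) := by
      rw [volume_pi]
      exact ((mp.symm e𝕋).measure_preimage hSb.nullMeasurableSet).symm
    rw [h1, Measure.prod_apply_symm (e𝕋.symm.measurable hSb)]
    congr 1
    funext z
    congr 1
    rw [← hslice s a z]
    ext t
    have h2 : e𝕋.symm (t, z) = j₀.insertNth t z := rfl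
    rw [mem_preimage, mem_preimage, h2]
    exact Iff.rfl
  rw [key R, key r]
  calc (∫⁻ a : Fin P → ℝ, ∫⁻ z : Fin Q' → Torus, volume (thickening R (Aset a z)))
      ≤ ∫⁻ a : Fin P → ℝ, ∫⁻ z : Fin Q' → Torus,
          ENNReal.ofReal (R / r) * volume (thickening r (Aset a z)) := by
        refine lintegral_mono fun a => lintegral_mono fun z => ?_
        exact oneDim_circle (Aset a z) hr hrR
    _ = ENNReal.ofReal (R / r) *
        ∫⁻ a : Fin P → ℝ, ∫⁻ z : Fin Q' → Torus, volume (thickening r (Aset a z)) := by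
        rw [← lintegral_const_mul' _ _ ENNReal.ofReal_ne_top]
        congr 1
        funext a
        rw [← lintegral_const_mul' _ _ ENNReal.ofReal_ne_top]

theorem step_real (E : Set ((Fin P → ℝ) × (Fin Q → Torus))) (δ : Fin P → ℝ) (ε : Fin Q → ℝ)
    (i₀ : Fin P) {r R : ℝ} (hr : 0 < r) (hrR : r ≤ R) :
    volume (VV E (Function.update δ i₀ R) ε) ≤
      ENNReal.ofReal (R / r) * volume (VV E (Function.update δ i₀ r) ε) := by
  cases P with
  | zero => exact i₀.elim0
  | succ P' =>
  set Aset : (Fin P' → ℝ) → (Fin Q → Torus) → Set ℝ := fun y b =>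
    {w | ∃ e ∈ E, (∀ i, dist (y i) (e.1 (i₀.succAbove i)) < δ (i₀.succAbove i)) ∧
      (∀ j, dist (b j) (e.2 j) < ε j) ∧ e.1 i₀ = w} with hAset
  have hslice : ∀ (s : ℝ) (y : Fin P' → ℝ) (b : Fin Q → Torus),
      {t : ℝ | (i₀.insertNth t y, b) ∈ VV E (Function.update δ i₀ s) ε}
        = thickening s (Aset y b) := by
    intro s y b
    ext t
    rw [mem_thickening_iff]
    simp only [VV, mem_setOf_eq, hAset]
    constructor
    · rintro ⟨e, he, h1, h2⟩
      rw [Fin.forall_iff_succAbove i₀] at h1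
      refine ⟨e.1 i₀, ⟨e, he, ?_, h2, rfl⟩, ?_⟩
      · intro i
        have := h1.2 i
        rwa [Fin.insertNth_apply_succAbove, Function.update_of_ne (Fin.succAbove_ne i₀ i)] at this
      · have := h1.1
        rwa [Fin.insertNth_apply_same, Function.update_self] at this
    · rintro ⟨w, ⟨e, he, h1, h2, rfl⟩, hd⟩
      refine ⟨e, he, ?_, h2⟩
      rw [Fin.forall_iff_succAbove i₀]
      constructor
      · rwa [Fin.insertNth_apply_same, Function.update_self]
      · intro i
        rw [Fin.insertNth_apply_succAbove, Function.update_of_ne (Fin.succAbove_ne i₀ i)]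
        exact h1 i
  have key : ∀ s : ℝ, volume (VV E (Function.update δ i₀ s) ε) =
      ∫⁻ b : Fin Q → Torus, ∫⁻ y : Fin P' → ℝ, volume (thickening s (Aset y b)) := by
    intro s
    have hW : MeasurableSet (VV E (Function.update δ i₀ s) ε) :=
      (isOpen_VV E _ ε).measurableSet
    rw [Measure.volume_eq_prod, Measure.prod_apply_symm hW]
    congr 1
    funext b
    have hSb : MeasurableSet ((fun a => (a, b)) ⁻¹' VV E (Function.update δ i₀ s) ε) :=
      hW.preimage (measurable_id.prodMk measurable_const)
    set eR := MeasurableEquiv.piFinSuccAbove (fun _ : Fin (P' + 1) => ℝ) i₀ with heR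
    have mp := measurePreserving_piFinSuccAbove (fun _ : Fin (P' + 1) => (volume : Measure ℝ)) i₀
    have h1 : (volume : Measure (Fin (P' + 1) → ℝ))
          ((fun a => (a, b)) ⁻¹' VV E (Function.update δ i₀ s) ε)
        = ((volume : Measure ℝ).prod (Measure.pi fun _ => (volume : Measure ℝ)))
          (eR.symm ⁻¹' ((fun a => (a, b)) ⁻¹' VV E (Function.update δ i₀ s) ε)) := by
      rw [volume_pi]
      exact ((mp.symm eR).measure_preimage hSb.nullMeasurableSet).symm
    rw [h1, Measure.prod_apply_symm (eR.symm.measurable hSb)]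
    congr 1
    funext y
    congr 1
    rw [← hslice s y b]
    ext t
    have h2 : eR.symm (t, y) = i₀.insertNth t y := rfl
    rw [mem_preimage, mem_preimage, h2]
    exact Iff.rfl
  rw [key R, key r]
  calc (∫⁻ b : Fin Q → Torus, ∫⁻ y : Fin P' → ℝ, volume (thickening R (Aset y b)))
      ≤ ∫⁻ b : Fin Q → Torus, ∫⁻ y : Fin P' → ℝ,
          ENNReal.ofReal (R / r) * volume (thickening r (Aset y b)) := by
        refine lintegral_mono fun b => lintegral_mono fun y => ?_
        exact oneDim_real (Aset y b) hr hrR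
    _ = ENNReal.ofReal (R / r) *
        ∫⁻ b : Fin Q → Torus, ∫⁻ y : Fin P' → ℝ, volume (thickening r (Aset y b)) := by
        rw [← lintegral_const_mul' _ _ ENNReal.ofReal_ne_top]
        congr 1
        funext b
        rw [← lintegral_const_mul' _ _ ENNReal.ofReal_ne_top]

theorem chain_tor (E : Set ((Fin P → ℝ) × (Fin Q → Torus))) (δ : Fin P → ℝ) {r R : ℝ}
    (hr : 0 < r) (hrR : r ≤ R) :
    volume (VV E δ (fun _ => R)) ≤
      ENNReal.ofReal (R / r) ^ Q * volume (VV E δ (fun _ => r)) := by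
  have key : ∀ t : Finset (Fin Q), volume (VV E δ (fun _ => R)) ≤
      ENNReal.ofReal (R / r) ^ t.card * volume (VV E δ (fun j => if j ∈ t then r else R)) := by
    intro t
    induction t using Finset.induction with
    | empty => simp
    | @insert j₀ t hj₀ ih =>
      have h1 : (fun j => if j ∈ t then r else R)
          = Function.update (fun j => if j ∈ insert j₀ t then r else R) j₀ R := by
        funext j
        by_cases h : j = j₀
        · subst h; simp [Function.update_self, hj₀]
        · simp [Function.update_of_ne h, Finset.mem_insert, h]
      have h2 : (fun j => if j ∈ insert j₀ t then r else R)
          = Function.update (fun j => if j ∈ insert j₀ t then r else R) j₀ r := by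
        funext j
        by_cases h : j = j₀
        · subst h; simp
        · simp [Function.update_of_ne h]
      have hstep := step_tor E δ (fun j => if j ∈ insert j₀ t then r else R) j₀ hr hrR
      rw [← h1, ← h2] at hstep
      calc volume (VV E δ (fun _ => R))
          ≤ ENNReal.ofReal (R / r) ^ t.card *
              volume (VV E δ (fun j => if j ∈ t then r else R)) := ih
        _ ≤ ENNReal.ofReal (R / r) ^ t.card * (ENNReal.ofReal (R / r) *
              volume (VV E δ (fun j => if j ∈ insert j₀ t then r else R))) :=
            mul_le_mul_right hstep _
        _ = ENNReal.ofReal (R / r) ^ (insert j₀ t).card *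
              volume (VV E δ (fun j => if j ∈ insert j₀ t then r else R)) := by
            rw [Finset.card_insert_of_notMem hj₀, pow_succ]
            ring
  have h := key Finset.univ
  simpa using h

theorem chain_real (E : Set ((Fin P → ℝ) × (Fin Q → Torus))) (ε : Fin Q → ℝ) {r R : ℝ}
    (hr : 0 < r) (hrR : r ≤ R) :
    volume (VV E (fun _ => R) ε) ≤
      ENNReal.ofReal (R / r) ^ P * volume (VV E (fun _ => r) ε) := by
  have key : ∀ t : Finset (Fin P), volume (VV E (fun _ => R) ε) ≤
      ENNReal.ofReal (R / r) ^ t.card * volume (VV E (fun i => if i ∈ t then r else R) ε) := by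
    intro t
    induction t using Finset.induction with
    | empty => simp
    | @insert i₀ t hi₀ ih =>
      have h1 : (fun i => if i ∈ t then r else R)
          = Function.update (fun i => if i ∈ insert i₀ t then r else R) i₀ R := by
        funext i
        by_cases h : i = i₀
        · subst h; simp [Function.update_self, hi₀]
        · simp [Function.update_of_ne h, Finset.mem_insert, h]
      have h2 : (fun i => if i ∈ insert i₀ t then r else R)
          = Function.update (fun i => if i ∈ insert i₀ t then r else R) i₀ r := by
        funext i
        by_cases h : i = i₀
        · subst h; simp
        · simp [Function.update_of_ne h]
      have hstep := step_real E (fun i => if i ∈ insert i₀ t then r else R) ε i₀ hr hrR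
      rw [← h1, ← h2] at hstep
      calc volume (VV E (fun _ => R) ε)
          ≤ ENNReal.ofReal (R / r) ^ t.card *
              volume (VV E (fun i => if i ∈ t then r else R) ε) := ih
        _ ≤ ENNReal.ofReal (R / r) ^ t.card * (ENNReal.ofReal (R / r) *
              volume (VV E (fun i => if i ∈ insert i₀ t then r else R) ε)) :=
            mul_le_mul_right hstep _
        _ = ENNReal.ofReal (R / r) ^ (insert i₀ t).card *
              volume (VV E (fun i => if i ∈ insert i₀ t then r else R) ε) := by
            rw [Finset.card_insert_of_notMem hi₀, pow_succ]
            ring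
  have h := key Finset.univ
  simpa using h

end Stmt12



/-- Neighborhood growth bound in `J = ℝ^{n-1} × 𝕋ⁿ`: for any bounded
measurable `E ⊆ J` and `Δ, Δ₁, ρ > 0`, the Haar measure of neighborhoods satisfies
`ν(V_{ρ+Δρ+Δ₁ρ}(E)) ≤ (1 + (1+Δ₁)/Δ)^{2n-1} · ν(V_{Δρ}(E))`,
where `V_δ(E)` is the `δ`-neighborhood of `E` in the invariant metric on `J`. -/
theorem stmt_12 (n : ℕ) (hn : 1 ≤ n)
    (E : Set ((Fin (n - 1) → ℝ) × (Fin n → Torus)))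
    (hE_bdd : Bornology.IsBounded E) (hE_meas : MeasurableSet E)
    (Δ Δ₁ ρ : ℝ) (hΔ : 0 < Δ) (hΔ₁ : 0 < Δ₁) (hρ : 0 < ρ) :
    volume (Metric.thickening (ρ + Δ * ρ + Δ₁ * ρ) E) ≤
      ENNReal.ofReal ((1 + (1 + Δ₁) / Δ) ^ (2 * n - 1)) *
        volume (Metric.thickening (Δ * ρ) E) := by
  set r : ℝ := Δ * ρ with hrdef
  set R : ℝ := ρ + Δ * ρ + Δ₁ * ρ with hRdef
  have hr : 0 < r := mul_pos hΔ hρ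
  have hR : 0 < R := by positivity
  have hrR : r ≤ R := by nlinarith
  have hq : R / r = 1 + (1 + Δ₁) / Δ := by
    rw [hrdef, hRdef]
    field_simp
    ring
  rw [Stmt12.thickening_eq_VV E hR, Stmt12.thickening_eq_VV E hr]
  calc volume (Stmt12.VV E (fun _ => R) (fun _ => R))
      ≤ ENNReal.ofReal (R / r) ^ n * volume (Stmt12.VV E (fun _ => R) (fun _ => r)) :=
        Stmt12.chain_tor E _ hr hrR
    _ ≤ ENNReal.ofReal (R / r) ^ n *
          (ENNReal.ofReal (R / r) ^ (n - 1) * volume (Stmt12.VV E (fun _ => r) (fun _ => r))) :=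
        mul_le_mul_right (Stmt12.chain_real E _ hr hrR) _
    _ = ENNReal.ofReal ((1 + (1 + Δ₁) / Δ) ^ (2 * n - 1)) *
          volume (Stmt12.VV E (fun _ => r) (fun _ => r)) := by
        rw [← mul_assoc, ← pow_add, hq,
          ENNReal.ofReal_pow (by positivity : (0:ℝ) ≤ 1 + (1 + Δ₁) / Δ)]
        congr 2
        omega
end

section
/- If E(λ₁,...,λ_n,v₁,...,v_n) generates a dense subgroup of ℝ^{n−1} × 𝕋ⁿ, then for all nonzero integers k₁,...,k_n, the set E(k₁λ₁,...,k_nλ_n, k₁v₁,...,k_nv_n) also generates a dense subgroup of ℝ^{n−1} × 𝕋ⁿ. -/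
open scoped Real

/-- The `j`-th of the `n` vectors of `E(λ₁,...,λ_n, v₁,...,v_n) ⊆ ℝ^{n-1} × 𝕋ⁿ`:
for `j < n-1` it is `(0,...,λ_j,...,0 ; 0,...,v_j,...,0)` (entries in position `j`),
and for `j = n-1` (the last one) it is `(−λ_n,...,−λ_n ; 0,...,0,v_n)`. -/
noncomputable def Evec (n : ℕ) (lam : Fin n → ℝ) (v : Fin n → Torus) (j : Fin n) :
    (Fin (n - 1) → ℝ) × (Fin n → Torus) :=
  ⟨if (j : ℕ) < n - 1 then (fun i => if (i : ℕ) = (j : ℕ) then lam j else 0)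
    else (fun _ => - lam j),
   fun i => if i = j then v j else 0⟩

/-- The set `E(λ₁,...,λ_n, v₁,...,v_n)`. -/
noncomputable def Eset (n : ℕ) (lam : Fin n → ℝ) (v : Fin n → Torus) :
    Set ((Fin (n - 1) → ℝ) × (Fin n → Torus)) :=
  Set.range (Evec n lam v)

/-- if `E(λ₁,...,λ_n,v₁,...,v_n)` generates a dense subgroup of
`ℝ^{n-1} × 𝕋ⁿ` then so does `E(k₁λ₁,...,k_nλ_n, k₁v₁,...,k_nv_n)` for any nonzero
integers `k₁,...,k_n`. -/
theorem stmt_15 (n : ℕ) (hn : 1 ≤ n)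
    (lam : Fin n → ℝ) (hlam : ∀ j, lam j < 0)
    (v : Fin n → Torus)
    (hdense : Dense (↑(AddSubgroup.closure (Eset n lam v)) :
        Set ((Fin (n - 1) → ℝ) × (Fin n → Torus))))
    (k : Fin n → ℤ) (hk : ∀ j, k j ≠ 0) :
    Dense (↑(AddSubgroup.closure (Eset n (fun j => (k j : ℝ) * lam j)
        (fun j => k j • v j))) : Set ((Fin (n - 1) → ℝ) × (Fin n → Torus))) := by
  classical
  set H := AddSubgroup.closure (Eset n (fun j => (k j : ℝ) * lam j) (fun j => k j • v j))
    with hH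
  have hvec : ∀ j, k j • Evec n lam v j
      = Evec n (fun j => (k j : ℝ) * lam j) (fun j => k j • v j) j := by
    intro j
    unfold Evec
    rw [Prod.smul_mk]
    refine Prod.ext ?_ ?_
    · dsimp only
      split_ifs with h
      · funext i
        by_cases hi : (i : ℕ) = (j : ℕ) <;> simp [hi, zsmul_eq_mul]
      · funext i
        simp [zsmul_eq_mul]
    · funext i
      by_cases hi : i = j <;> simp [hi]
  set K : ℤ := ∏ j, k j with hK
  have hKne : K ≠ 0 := Finset.prod_ne_zero_iff.mpr (fun j _ => hk j)
  have hmem : ∀ x ∈ AddSubgroup.closure (Eset n lam v), K • x ∈ H := by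
    intro x hx
    induction hx using AddSubgroup.closure_induction with
    | mem y hy =>
        obtain ⟨j, rfl⟩ := hy
        obtain ⟨c, hc⟩ : k j ∣ K := Finset.dvd_prod_of_mem k (Finset.mem_univ j)
        rw [hc, mul_comm (k j) c, mul_smul, hvec]
        exact zsmul_mem (AddSubgroup.subset_closure (Set.mem_range_self j)) c
    | zero => simpa using H.zero_mem
    | add x y hx hy ihx ihy => rw [smul_add]; exact H.add_mem ihx ihy
    | neg x hx ihx => rw [smul_neg]; exact H.neg_mem ihx
  intro y
  obtain ⟨x, hx⟩ : ∃ x, K • x = y := ⟨DivisibleBy.div y K, DivisibleBy.div_cancel y hKne⟩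
  have h2 : y ∈ closure ((fun z => K • z) '' (↑(AddSubgroup.closure (Eset n lam v)))) := by
    rw [← hx]
    exact image_closure_subset_closure_image (continuous_zsmul K) ⟨x, hdense x, rfl⟩
  refine closure_mono ?_ h2
  rintro _ ⟨z, hz, rfl⟩
  exact hmem z hz
end

section
/- If λ₁,...,λ_n < 0 and E(λ₁,...,λ_n,v₁,...,v_n) generates a dense subgroup of ℝ^{n−1} × 𝕋ⁿ, then it generates a dense semigroup: the set of linear combinations of the n vectors of E(λ₁,...,λ_n,v₁,...,v_n) with coefficients in ℕ is dense in ℝ^{n−1} × 𝕋ⁿ. -/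
open scoped Real

/-- The first (real) component of an `ℕ`-linear combination of the vectors of `E`. -/
lemma sum_Evec_fst (n : ℕ) (hn : 1 ≤ n) (lam : Fin n → ℝ) (v : Fin n → Torus)
    (a : Fin n → ℕ) (i : Fin (n - 1)) :
    (∑ j, a j • Evec n lam v j).1 i
      = (a (Fin.castLE (Nat.sub_le n 1) i) : ℝ) * lam (Fin.castLE (Nat.sub_le n 1) i)
        - (a ⟨n - 1, Nat.sub_lt hn one_pos⟩ : ℝ) * lam ⟨n - 1, Nat.sub_lt hn one_pos⟩ := by
  classical
  set iF : Fin n := Fin.castLE (Nat.sub_le n 1) i with hiF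
  set lastF : Fin n := ⟨n - 1, Nat.sub_lt hn one_pos⟩ with hlastF
  let F : ((Fin (n-1) → ℝ) × (Fin n → Torus)) →+ ℝ :=
    (Pi.evalAddMonoidHom (fun _ => ℝ) i).comp (AddMonoidHom.fst _ _)
  have hF : ∀ z, F z = z.1 i := fun z => rfl
  have h1 : (∑ j, a j • Evec n lam v j).1 i = ∑ j, (a j : ℝ) * (Evec n lam v j).1 i := by
    rw [← hF, map_sum]
    exact Finset.sum_congr rfl fun j _ => by rw [map_nsmul, hF, nsmul_eq_mul]
  rw [h1]
  have h2 : ∀ j : Fin n, (a j : ℝ) * (Evec n lam v j).1 i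
      = (if j = iF then (a j : ℝ) * lam j else 0)
        + (if j = lastF then -((a j : ℝ) * lam j) else 0) := by
    intro j
    have hi2 : (i : ℕ) < n - 1 := i.2
    simp only [Evec]
    by_cases hj : (j : ℕ) < n - 1
    · rw [if_pos hj]
      have hjlast : j ≠ lastF := by
        intro h; rw [h] at hj; simp [hlastF] at hj
      rw [if_neg hjlast, add_zero]
      by_cases hij : (i : ℕ) = (j : ℕ)
      · have : j = iF := by apply Fin.ext; simp [hiF, ← hij]
        rw [if_pos this, if_pos hij]
      · have : j ≠ iF := by intro h; apply hij; rw [h]; simp [hiF]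
        rw [if_neg this, if_neg hij, mul_zero]
    · rw [if_neg hj]
      have hjlast : j = lastF := by
        apply Fin.ext; have := j.2; simp only [hlastF]; omega
      have hjiF : j ≠ iF := by
        intro h; apply hj; rw [h]; simpa [hiF] using hi2
      rw [if_neg hjiF, if_pos hjlast, zero_add, mul_neg]
  rw [Finset.sum_congr rfl fun j _ => h2 j, Finset.sum_add_distrib,
    Finset.sum_ite_eq' Finset.univ iF (fun j => (a j : ℝ) * lam j),
    Finset.sum_ite_eq' Finset.univ lastF (fun j => -((a j : ℝ) * lam j))]
  simp [sub_eq_add_neg]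

/-- Key: there are `ℕ`-combinations of the vectors of `E` with all coefficients `≥ 1`
arbitrarily close to `0`. -/
lemma key_combo (n : ℕ) (hn : 1 ≤ n) (lam : Fin n → ℝ) (hlam : ∀ j, lam j < 0)
    (v : Fin n → Torus)
    (U : Set ((Fin (n - 1) → ℝ) × (Fin n → Torus))) (hU : U ∈ nhds 0) :
    ∃ a : Fin n → ℕ, (∀ j, 1 ≤ a j) ∧ (∑ j, a j • Evec n lam v j) ∈ U := by
  classical
  set lastF : Fin n := ⟨n - 1, Nat.sub_lt hn one_pos⟩ with hlastF
  set cF : Fin (n - 1) → Fin n := Fin.castLE (Nat.sub_le n 1) with hcF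
  have hrpos : ∀ j : Fin n, 0 < lam lastF / lam j := fun j =>
    div_pos_of_neg_of_neg (hlam lastF) (hlam j)
  -- choose N with N * (lam lastF / lam j) ≥ 2 for all j
  set N : ℕ := 1 + Finset.univ.sup (fun j : Fin n => ⌈2 / (lam lastF / lam j)⌉₊) with hNdef
  have hN1 : 1 ≤ N := Nat.le_add_right 1 _
  have hN2 : ∀ j : Fin n, 2 ≤ (N : ℝ) * (lam lastF / lam j) := by
    intro j
    have h0 : ⌈2 / (lam lastF / lam j)⌉₊ ≤
        Finset.univ.sup (fun j : Fin n => ⌈2 / (lam lastF / lam j)⌉₊) :=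
      Finset.le_sup (f := fun j : Fin n => ⌈2 / (lam lastF / lam j)⌉₊) (Finset.mem_univ j)
    have h1 : (⌈2 / (lam lastF / lam j)⌉₊ : ℕ) ≤ N := by rw [hNdef]; omega
    have h2 : 2 / (lam lastF / lam j) ≤ (N : ℝ) :=
      le_trans (Nat.le_ceil _) (by exact_mod_cast h1)
    have h3 := mul_le_mul_of_nonneg_right h2 (hrpos j).le
    rwa [div_mul_cancel₀ _ (hrpos j).ne'] at h3
  -- the sequence of combinations
  set b : ℕ → Fin n → ℕ := fun k j =>
    if (j : ℕ) < n - 1 then ⌊((k * N : ℕ) : ℝ) * (lam lastF / lam j)⌋₊ else k * N with hb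
  set x : ℕ → ((Fin (n - 1) → ℝ) × (Fin n → Torus)) := fun k => ∑ j, b k j • Evec n lam v j with hxdef
  -- monotonicity with gap ≥ 1
  have hmono : ∀ k₁ k₂ : ℕ, k₁ < k₂ → ∀ j, b k₁ j + 1 ≤ b k₂ j := by
    intro k₁ k₂ hk j
    by_cases hj : (j : ℕ) < n - 1
    · simp only [hb, if_pos hj]
      set ρ := lam lastF / lam j with hρdef
      have hρ := hrpos j
      have hy1 : (0:ℝ) ≤ ((k₁ * N : ℕ) : ℝ) * ρ := mul_nonneg (Nat.cast_nonneg _) hρ.le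
      have hfl : (⌊((k₁ * N : ℕ) : ℝ) * ρ⌋₊ : ℝ) ≤ ((k₁ * N : ℕ) : ℝ) * ρ := Nat.floor_le hy1
      have hstep : ((k₁ * N : ℕ) : ℝ) * ρ + 1 ≤ ((k₂ * N : ℕ) : ℝ) * ρ := by
        have hNρ := hN2 j
        rw [← hρdef] at hNρ
        have hk' : (k₁ : ℝ) + 1 ≤ (k₂ : ℝ) := by exact_mod_cast hk
        have hN' : (1 : ℝ) ≤ (N : ℝ) := by exact_mod_cast hN1
        push_cast
        nlinarith [mul_nonneg (by linarith : (0:ℝ) ≤ (k₂:ℝ) - k₁ - 1)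
          (by linarith : (0:ℝ) ≤ (N:ℝ) * ρ)]
      apply Nat.le_floor
      push_cast at hstep hfl ⊢
      linarith
    · simp only [hb, if_neg hj]
      have h1 : (k₁ + 1) * N ≤ k₂ * N := Nat.mul_le_mul_right _ hk
      have h2 : k₁ * N + N = (k₁ + 1) * N := by ring
      omega
  -- real parts are uniformly bounded
  have hx1 : ∀ k (i : Fin (n - 1)), |(x k).1 i| ≤ |lam (cF i)| := by
    intro k i
    have hform := sum_Evec_fst n hn lam v (b k) i
    simp only [hxdef]
    rw [hform]
    have hci : ((cF i : Fin n) : ℕ) < n - 1 := by simpa [hcF] using i.2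
    have hbl : b k lastF = k * N := by simp [hb, hlastF]
    have hbc : b k (cF i) = ⌊((k * N : ℕ) : ℝ) * (lam lastF / lam (cF i))⌋₊ := by
      simp [hb, hci]
    set y : ℝ := ((k * N : ℕ) : ℝ) * (lam lastF / lam (cF i)) with hy
    have hy0 : 0 ≤ y := mul_nonneg (Nat.cast_nonneg _) (hrpos _).le
    have hrel : ((k * N : ℕ) : ℝ) * lam lastF = y * lam (cF i) := by
      rw [hy, mul_assoc, div_mul_cancel₀ _ (hlam (cF i)).ne]
    have hEq : (b k (cF i) : ℝ) * lam (cF i) - (b k lastF : ℝ) * lam lastF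
        = ((⌊y⌋₊ : ℝ) - y) * lam (cF i) := by
      rw [hbl, hbc, hrel]; ring
    rw [show (Fin.castLE (Nat.sub_le n 1) i) = cF i from rfl,
      show (⟨n - 1, Nat.sub_lt hn one_pos⟩ : Fin n) = lastF from rfl, hEq, abs_mul]
    have h1 : |(⌊y⌋₊ : ℝ) - y| ≤ 1 := by
      rw [abs_le]
      constructor
      · have := Nat.lt_floor_add_one y; linarith
      · have := Nat.floor_le hy0; linarith
    nlinarith [abs_nonneg (lam (cF i))]
  -- the sequence lives in a compact set
  set K : Set ((Fin (n - 1) → ℝ) × (Fin n → Torus)) := (Set.univ.pi fun i : Fin (n-1) => Set.Icc (-|lam (cF i)|) |lam (cF i)|) ×ˢ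
      (Set.univ : Set (Fin n → Torus)) with hK
  have hKc : IsCompact K := (isCompact_univ_pi fun i => isCompact_Icc).prod isCompact_univ
  have hxK : ∀ k, x k ∈ K := by
    intro k
    refine ⟨fun i _ => ?_, trivial⟩
    have := hx1 k i
    rw [abs_le] at this
    exact ⟨this.1, this.2⟩
  have hmap : Filter.map x Filter.atTop ≤ Filter.principal K := by
    rw [Filter.le_principal_iff]
    exact Filter.mem_map.mpr (Filter.univ_mem' hxK)
  obtain ⟨p, -, hp⟩ := hKc.exists_clusterPt hmap
  -- choose a neighborhood W of p with W - W ⊆ U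
  have hsub : Filter.Tendsto (fun q : ((Fin (n - 1) → ℝ) × (Fin n → Torus)) × ((Fin (n - 1) → ℝ) × (Fin n → Torus)) => q.1 - q.2) (nhds (p, p)) (nhds 0) := by
    have := set_option synthInstance.maxHeartbeats 400000 in (continuous_sub (G := (Fin (n - 1) → ℝ) × (Fin n → Torus))).tendsto (p, p)
    simpa using this
  have hpre : (fun q : ((Fin (n - 1) → ℝ) × (Fin n → Torus)) × ((Fin (n - 1) → ℝ) × (Fin n → Torus)) => q.1 - q.2) ⁻¹' U ∈ nhds (p, p) := hsub hU
  rw [nhds_prod_eq] at hpre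
  obtain ⟨W₁, hW₁, W₂, hW₂, hWsub⟩ := Filter.mem_prod_iff.mp hpre
  have hfreq : ∃ᶠ k in Filter.atTop, x k ∈ W₁ ∩ W₂ :=
    mapClusterPt_iff_frequently.mp (mapClusterPt_def.mpr hp) _ (Filter.inter_mem hW₁ hW₂)
  obtain ⟨k₁, -, hk₁⟩ := (Filter.frequently_atTop.mp hfreq) 0
  obtain ⟨k₂, hk₂ge, hk₂⟩ := (Filter.frequently_atTop.mp hfreq) (k₁ + 1)
  have hklt : k₁ < k₂ := hk₂ge
  refine ⟨fun j => b k₂ j - b k₁ j, ?_, ?_⟩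
  · intro j
    show 1 ≤ b k₂ j - b k₁ j
    have := hmono k₁ k₂ hklt j; omega
  · have hsumeq : (∑ j, (b k₂ j - b k₁ j) • Evec n lam v j) = x k₂ - x k₁ := by
      simp only [hxdef]
      rw [← Finset.sum_sub_distrib]
      refine Finset.sum_congr rfl fun j _ => ?_
      have h := hmono k₁ k₂ hklt j
      rw [sub_nsmul (Evec n lam v j) (by omega : b k₁ j ≤ b k₂ j), sub_eq_add_neg]
    rw [hsumeq]
    have := hWsub (Set.mk_mem_prod hk₂.1 hk₁.2)
    simpa using this

/-- if `λ₁,...,λ_n < 0` and `E(λ₁,...,λ_n,v₁,...,v_n)` generates a dense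
subgroup of `ℝ^{n-1} × 𝕋ⁿ`, then it already generates a dense semigroup: the set of
ℕ-linear combinations of its `n` vectors (i.e. the additive submonoid it generates) is
dense in `ℝ^{n-1} × 𝕋ⁿ`. -/
theorem stmt_16 (n : ℕ) (hn : 1 ≤ n)
    (lam : Fin n → ℝ) (hlam : ∀ j, lam j < 0)
    (v : Fin n → Torus)
    (hdense : Dense (↑(AddSubgroup.closure (Eset n lam v)) :
        Set ((Fin (n - 1) → ℝ) × (Fin n → Torus)))) :
    Dense (↑(AddSubmonoid.closure (Eset n lam v)) :
        Set ((Fin (n - 1) → ℝ) × (Fin n → Torus))) := by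
  classical
  set E : Set ((Fin (n - 1) → ℝ) × (Fin n → Torus)) := Eset n lam v with hE
  have hsE : ∀ j, Evec n lam v j ∈ E := fun j => ⟨j, rfl⟩
  -- each `-Evec j` lies in the closure of the submonoid generated by `E`
  have hneg : ∀ j, -(Evec n lam v j) ∈ closure (↑(AddSubmonoid.closure E) : Set ((Fin (n - 1) → ℝ) × (Fin n → Torus))) := by
    intro j
    rw [mem_closure_iff_nhds]
    intro t ht
    have hc : ContinuousAt (fun z : ((Fin (n - 1) → ℝ) × (Fin n → Torus)) => z - Evec n lam v j) 0 :=
      (continuous_id.sub continuous_const).continuousAt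
    have hU : (fun z : ((Fin (n - 1) → ℝ) × (Fin n → Torus)) => z - Evec n lam v j) ⁻¹' t ∈ nhds (0 : (Fin (n - 1) → ℝ) × (Fin n → Torus)) := by
      apply hc.preimage_mem_nhds
      simpa using ht
    obtain ⟨a, ha1, haU⟩ := key_combo n hn lam hlam v _ hU
    refine ⟨∑ l, a l • Evec n lam v l - Evec n lam v j, haU, ?_⟩
    have heq : ∑ l, a l • Evec n lam v l - Evec n lam v j
        = ∑ l, (if l = j then a l - 1 else a l) • Evec n lam v l := by
      have h1 : ∀ l : Fin n, (if l = j then a l - 1 else a l) • Evec n lam v l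
          = a l • Evec n lam v l - (if l = j then Evec n lam v j else 0) := by
        intro l
        by_cases hl : l = j
        · subst hl
          rw [if_pos rfl, if_pos rfl, sub_nsmul _ (ha1 l), one_nsmul, sub_eq_add_neg]
        · rw [if_neg hl, if_neg hl, sub_zero]
      rw [Finset.sum_congr rfl fun l _ => h1 l, Finset.sum_sub_distrib,
        Finset.sum_ite_eq' Finset.univ j (fun _ => Evec n lam v j)]
      simp
    rw [heq]
    exact AddSubmonoid.sum_mem _ fun l _ =>
      AddSubmonoid.nsmul_mem _ (AddSubmonoid.subset_closure (hsE l)) _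
  -- the closure of the submonoid contains the subgroup closure
  have hsub : (↑(AddSubgroup.closure E) : Set ((Fin (n - 1) → ℝ) × (Fin n → Torus))) ⊆
      closure (↑(AddSubmonoid.closure E) : Set ((Fin (n - 1) → ℝ) × (Fin n → Torus))) := by
    have h1 : AddSubmonoid.closure (E ∪ -E) ≤ (AddSubmonoid.closure E).topologicalClosure := by
      rw [AddSubmonoid.closure_le]
      rintro z (hz | hz)
      · exact subset_closure (AddSubmonoid.subset_closure hz)
      · obtain ⟨j, hj⟩ : ∃ j, Evec n lam v j = -z := hz
        have : z = -(Evec n lam v j) := by rw [hj, neg_neg]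
        rw [this]
        exact hneg j
    intro z hz
    have h2 : z ∈ (AddSubgroup.closure E).toAddSubmonoid := hz
    rw [AddSubgroup.closure_toAddSubmonoid] at h2
    exact h1 h2
  rw [dense_iff_closure_eq] at hdense ⊢
  apply Set.eq_univ_of_univ_subset
  calc (Set.univ : Set ((Fin (n - 1) → ℝ) × (Fin n → Torus))) = closure (↑(AddSubgroup.closure E) : Set ((Fin (n - 1) → ℝ) × (Fin n → Torus))) := hdense.symm
    _ ⊆ closure (closure (↑(AddSubmonoid.closure E) : Set ((Fin (n - 1) → ℝ) × (Fin n → Torus)))) := closure_mono hsub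
    _ = closure (↑(AddSubmonoid.closure E) : Set ((Fin (n - 1) → ℝ) × (Fin n → Torus))) := closure_closure
end

section
/- Conformality of higher derivatives on directionally rich sets: let K ⊂ ℂ be a compact set such that for every x ∈ K the set K_x^dir = ⋂_{δ>0} closure{(y−x)/|y−x| : y ∈ B_δ(x) ∩ (K \ {x})} contains two ℝ-linearly independent vectors, and let f be a C^l map from a neighborhood of K into ℝ² ≅ ℂ such that Df(x) is a conformal linear map for every x ∈ K. Then for every x ∈ K and every 1 ≤ k ≤ l, the k-linear map D^k f(x) : (ℝ²)^k → ℝ² is conformal, i.e. there exists c ∈ ℂ with D^k f(x)(z₁,...,z_k) = c · z₁ · z₂ ⋯ z_k (complex multiplication, identifying ℝ² with ℂ). -/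
set_option maxHeartbeats 1000000

open Filter Topology Asymptotics Set


/-- The set of limit directions of `K` at `x`:
`K_x^dir = ⋂_{δ>0} closure{(y−x)/|y−x| : y ∈ B_δ(x) ∩ (K \ {x})}`. -/
def dirSet (K : Set ℂ) (x : ℂ) : Set ℂ :=
  ⋂ δ > (0 : ℝ), closure
    {u : ℂ | ∃ y ∈ Metric.ball x δ ∩ (K \ {x}), u = (‖y - x‖)⁻¹ • (y - x)}


/-- If `h` is differentiable at `x ∈ K` and maps `K` into a closed submodule `S`, then the
derivative of `h` at `x` in any limit direction of `K` at `x` lies in `S`. -/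
lemma dir_mem {F : Type*} [NormedAddCommGroup F] [NormedSpace ℝ F]
    (K : Set ℂ) {x u : ℂ} (hx : x ∈ K) (hu : u ∈ dirSet K x)
    {h : ℂ → F} (hd : DifferentiableAt ℝ h x)
    (S : Submodule ℝ F) (hS : IsClosed (S : Set F)) (hmem : ∀ y ∈ K, h y ∈ S) :
    fderiv ℝ h x u ∈ S := by
  set D := fderiv ℝ h x with hD
  have H : ∀ n : ℕ, ∃ y, y ∈ K ∧ y ≠ x ∧ ‖y - x‖ < 1/(n+1) ∧
      ‖(‖y - x‖)⁻¹ • (y - x) - u‖ < 1/(n+1) := by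
    intro n
    have hδ : (0:ℝ) < 1/(n+1) := by positivity
    have hu' : u ∈ closure {u' : ℂ | ∃ y ∈ Metric.ball x (1/(n+1)) ∩ (K \ {x}),
        u' = (‖y - x‖)⁻¹ • (y - x)} := by
      have := Set.mem_iInter₂.1 hu (1/(n+1)) hδ
      exact this
    rcases Metric.mem_closure_iff.1 hu' (1/(n+1)) hδ with ⟨b, hbmem, hb⟩
    rcases hbmem with ⟨y, ⟨hyball, hyK, hyx⟩, rfl⟩
    refine ⟨y, hyK, hyx, ?_, ?_⟩
    · simpa [dist_eq_norm] using hyball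
    · rw [← dist_eq_norm, dist_comm]
      exact hb
  choose y hyK hyne hy1 hy2 using H
  have hinv : Tendsto (fun n : ℕ => 1/((n:ℝ)+1)) atTop (𝓝 0) :=
    tendsto_one_div_add_atTop_nhds_zero_nat
  have hyx : Tendsto y atTop (𝓝 x) := by
    rw [tendsto_iff_dist_tendsto_zero]
    exact squeeze_zero (fun n => dist_nonneg)
      (fun n => by rw [dist_eq_norm]; exact (hy1 n).le) hinv
  set v : ℕ → ℂ := fun n => (‖y n - x‖)⁻¹ • (y n - x) with hv
  have hvnorm : ∀ n, ‖y n - x‖ ≠ 0 := fun n => by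
    simp [sub_eq_zero, hyne n]
  have hvu : Tendsto v atTop (𝓝 u) := by
    have : Tendsto (fun n => v n - u) atTop (𝓝 0) :=
      squeeze_zero_norm (fun n => (hy2 n).le) hinv
    simpa using this.add_const u
  set q : ℕ → F := fun n => (‖y n - x‖)⁻¹ • (h (y n) - h x) with hq
  have hqS : ∀ n, q n ∈ S := fun n => S.smul_mem _ (S.sub_mem (hmem _ (hyK n)) (hmem _ hx))
  have hlo : (fun n => h (y n) - h x - D (y n - x)) =o[atTop] (fun n => y n - x) :=
    (hd.hasFDerivAt.isLittleO).comp_tendsto hyx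
  have hdiff : Tendsto (fun n => q n - D (v n)) atTop (𝓝 0) := by
    rw [NormedAddCommGroup.tendsto_nhds_zero]
    intro ε hε
    filter_upwards [hlo.def (half_pos hε)] with n hn
    have hpos : 0 < ‖y n - x‖ := lt_of_le_of_ne (norm_nonneg _) (Ne.symm (hvnorm n))
    have : q n - D (v n) = (‖y n - x‖)⁻¹ • (h (y n) - h x - D (y n - x)) := by
      have e1 : D (v n) = (‖y n - x‖)⁻¹ • D (y n - x) := D.map_smul _ _
      rw [e1]; simp only [hq, smul_sub]
    rw [this, norm_smul, norm_inv, norm_norm]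
    calc ‖y n - x‖⁻¹ * ‖h (y n) - h x - D (y n - x)‖
        ≤ ‖y n - x‖⁻¹ * (ε/2 * ‖y n - x‖) := by gcongr
      _ = ε/2 := by
          rw [show ‖y n - x‖⁻¹ * (ε/2 * ‖y n - x‖)
              = ε/2 * (‖y n - x‖⁻¹ * ‖y n - x‖) by ring,
            inv_mul_cancel₀ (hvnorm n), mul_one]
      _ < ε := half_lt_self hε
  have hDv : Tendsto (fun n => D (v n)) atTop (𝓝 (D u)) :=
    (D.continuous.tendsto u).comp hvu
  have hqD : Tendsto q atTop (𝓝 (D u)) := by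
    have := hdiff.add hDv
    simpa using this
  exact hS.mem_of_tendsto hqD (Filter.Eventually.of_forall hqS)

/-- With two independent limit directions, the whole derivative maps into `S`. -/
lemma dir_span {F : Type*} [NormedAddCommGroup F] [NormedSpace ℝ F]
    (K : Set ℂ) {x : ℂ} (hx : x ∈ K)
    (hdirx : ∃ u ∈ dirSet K x, ∃ w ∈ dirSet K x, LinearIndependent ℝ ![u, w])
    {h : ℂ → F} (hd : DifferentiableAt ℝ h x)
    (S : Submodule ℝ F) (hS : IsClosed (S : Set F)) (hmem : ∀ y ∈ K, h y ∈ S) :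
    ∀ a : ℂ, fderiv ℝ h x a ∈ S := by
  obtain ⟨u, hu, w, hw, hind⟩ := hdirx
  have hcard : Fintype.card (Fin 2) = Module.finrank ℝ ℂ := by
    simp [Complex.finrank_real_complex]
  let b := basisOfLinearIndependentOfCardEqFinrank hind hcard
  have hb : ⇑b = ![u, w] := coe_basisOfLinearIndependentOfCardEqFinrank _ _
  intro a
  have ha : a = b.repr a 0 • u + b.repr a 1 • w := by
    conv_lhs => rw [← b.sum_repr a]
    simp [Fin.sum_univ_two, hb]
  rw [ha, map_add, map_smul, map_smul]
  exact S.add_mem (S.smul_mem _ (dir_mem K hx hu hd S hS hmem))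
    (S.smul_mem _ (dir_mem K hx hw hd S hS hmem))

lemma prod_cons_aux (n : ℕ) (a : ℂ) (v : Fin n → ℂ) :
    ∏ i, (Fin.cons a v : Fin (n+1) → ℂ) i = a * ∏ i, v i := by
  rw [Fin.prod_univ_succ]; simp

lemma mkPiAlgebraFin_apply' (m : ℕ) (v : Fin m → ℂ) :
    ContinuousMultilinearMap.mkPiAlgebraFin ℝ m ℂ v = ∏ i, v i := by
  simp [ContinuousMultilinearMap.mkPiAlgebraFin_apply, List.prod_ofFn]

/-- Conformality of higher derivatives on directionally rich sets:
let `K ⊆ ℂ` be compact such that every `x ∈ K` has two ℝ-linearly independent limit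
directions, and let `f` be `C^l` on an open neighborhood `U` of `K` with `Df(x)`
a conformal (i.e. complex-linear with nonzero factor) map for every `x ∈ K`.  Then for
every `x ∈ K` and `1 ≤ k ≤ l`, the `k`-th derivative is conformal: there is `c ∈ ℂ`
with `D^k f(x)(z₁,...,z_k) = c·z₁·z₂⋯z_k`. -/
theorem stmt_18 (K : Set ℂ) (hK : IsCompact K)
    (hdir : ∀ x ∈ K, ∃ u ∈ dirSet K x, ∃ w ∈ dirSet K x, LinearIndependent ℝ ![u, w])
    (l : ℕ) (f : ℂ → ℂ) (U : Set ℂ) (hU : IsOpen U) (hKU : K ⊆ U)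
    (hf : ContDiffOn ℝ l f U)
    (hconf : ∀ x ∈ K, ∃ c : ℂ, c ≠ 0 ∧ ∀ z : ℂ, fderiv ℝ f x z = c * z) :
    ∀ x ∈ K, ∀ k : ℕ, 1 ≤ k → k ≤ l → ∃ c : ℂ,
      ∀ z : Fin k → ℂ, (iteratedFDeriv ℝ k f x) z = c * ∏ i, z i := by
  have hfat : ∀ x ∈ K, ContDiffAt ℝ l f x :=
    fun x hx => hf.contDiffAt (hU.mem_nhds (hKU hx))
  suffices Claim : ∀ m : ℕ, m + 1 ≤ l → ∀ x ∈ K,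
      ∃ c : ℂ, iteratedFDeriv ℝ (m+1) f x =
        c • ContinuousMultilinearMap.mkPiAlgebraFin ℝ (m+1) ℂ by
    intro x hx k hk1 hkl
    obtain ⟨m, rfl⟩ := Nat.exists_eq_succ_of_ne_zero (by omega : k ≠ 0)
    obtain ⟨c, hc⟩ := Claim m hkl x hx
    exact ⟨c, fun z => by
      rw [hc, ContinuousMultilinearMap.smul_apply, mkPiAlgebraFin_apply', smul_eq_mul]⟩
  intro m
  induction m with
  | zero =>
    intro _ x hx
    obtain ⟨c, _, hc⟩ := hconf x hx
    refine ⟨c, ?_⟩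
    ext w
    rw [iteratedFDeriv_one_apply, hc, ContinuousMultilinearMap.smul_apply,
      mkPiAlgebraFin_apply', smul_eq_mul]
    simp
  | succ m IH =>
    intro hml x hx
    have IH' := IH (by omega)
    have hfx := hfat x hx
    -- abbreviations (kept unfolded for definitional transparency)
    -- G := fderiv ℝ (iteratedFDeriv ℝ m f) ; T1 := iteratedFDeriv ℝ (m+1) f
    -- the submodule S = ℂ • P
    set P : ContinuousMultilinearMap ℝ (fun _ : Fin (m+1) => ℂ) ℂ :=
      ContinuousMultilinearMap.mkPiAlgebraFin ℝ (m+1) ℂ with hP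
    set S : Submodule ℝ (ContinuousMultilinearMap ℝ (fun _ : Fin (m+1) => ℂ) ℂ) :=
      (Submodule.span ℂ {P}).restrictScalars ℝ with hSdef
    have hSclosed : IsClosed (S : Set (ContinuousMultilinearMap ℝ (fun _ : Fin (m+1) => ℂ) ℂ)) := by
      rw [hSdef]
      simp only [Submodule.coe_restrictScalars]
      exact Submodule.closed_of_finiteDimensional _
    -- smoothness facts
    have hT1smooth : ContDiffAt ℝ 1 (iteratedFDeriv ℝ (m+1) f) x :=
      hfx.iteratedFDeriv_right (by exact_mod_cast (by omega : 1 + (m+1) ≤ l))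
    have hT1diff : DifferentiableAt ℝ (iteratedFDeriv ℝ (m+1) f) x :=
      hT1smooth.differentiableAt one_ne_zero
    have hTm2 : ContDiffAt ℝ 2 (iteratedFDeriv ℝ m f) x :=
      hfx.iteratedFDeriv_right (by exact_mod_cast (by omega : 2 + m ≤ l))
    have hGsmooth : ContDiffAt ℝ 1 (fderiv ℝ (iteratedFDeriv ℝ m f)) x :=
      hTm2.fderiv_right (by norm_num)
    have hGdiff : DifferentiableAt ℝ (fderiv ℝ (iteratedFDeriv ℝ m f)) x :=
      hGsmooth.differentiableAt one_ne_zero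
    have hsymm : IsSymmSndFDerivAt ℝ (iteratedFDeriv ℝ m f) x :=
      hTm2.isSymmSndFDerivAt (by simp)
    -- values of G on K via IH
    have hGapp : ∀ (y : ℂ) (a : ℂ) (v : Fin m → ℂ),
        fderiv ℝ (iteratedFDeriv ℝ m f) y a v = iteratedFDeriv ℝ (m+1) f y (Fin.cons a v) := by
      intro y a v
      rw [iteratedFDeriv_succ_apply_left, Fin.cons_zero, Fin.tail_cons]
    -- the "antiholomorphic part" h of G vanishes on K
    set h : ℂ → ContinuousMultilinearMap ℝ (fun _ : Fin m => ℂ) ℂ :=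
      fun y => fderiv ℝ (iteratedFDeriv ℝ m f) y Complex.I
        - Complex.I • fderiv ℝ (iteratedFDeriv ℝ m f) y 1 with hhdef
    have hh0 : ∀ y ∈ K, h y ∈ (⊥ : Submodule ℝ _) := by
      intro y hy
      obtain ⟨c, hc⟩ := IH' y hy
      rw [Submodule.mem_bot]
      ext v
      rw [hhdef]
      simp only [ContinuousMultilinearMap.sub_apply, ContinuousMultilinearMap.smul_apply,
        ContinuousMultilinearMap.zero_apply]
      rw [hGapp, hGapp, hc]
      simp only [ContinuousMultilinearMap.smul_apply, hP, mkPiAlgebraFin_apply',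
        prod_cons_aux, smul_eq_mul]
      ring
    -- h is differentiable at x with derivative a ↦ fderiv G x a I - I • fderiv G x a 1
    have hhI : HasFDerivAt (fun y => fderiv ℝ (iteratedFDeriv ℝ m f) y Complex.I)
        ((fderiv ℝ (fderiv ℝ (iteratedFDeriv ℝ m f)) x).flip Complex.I) x := by
      simpa using hGdiff.hasFDerivAt.clm_apply (hasFDerivAt_const Complex.I x)
    have hh1 : HasFDerivAt (fun y => fderiv ℝ (iteratedFDeriv ℝ m f) y 1)
        ((fderiv ℝ (fderiv ℝ (iteratedFDeriv ℝ m f)) x).flip 1) x := by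
      simpa using hGdiff.hasFDerivAt.clm_apply (hasFDerivAt_const (1:ℂ) x)
    have hhd : HasFDerivAt h
        ((fderiv ℝ (fderiv ℝ (iteratedFDeriv ℝ m f)) x).flip Complex.I
          - Complex.I • (fderiv ℝ (fderiv ℝ (iteratedFDeriv ℝ m f)) x).flip 1) x :=
      hhI.sub (hh1.const_smul Complex.I)
    -- the key relation (**)
    have hstar : ∀ a : ℂ, fderiv ℝ (fderiv ℝ (iteratedFDeriv ℝ m f)) x a Complex.I
        = Complex.I • fderiv ℝ (fderiv ℝ (iteratedFDeriv ℝ m f)) x a 1 := by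
      intro a
      have := dir_span K hx (hdir x hx) hhd.differentiableAt
        (⊥ : Submodule ℝ _) isClosed_singleton hh0 a
      rw [Submodule.mem_bot, hhd.fderiv] at this
      have := sub_eq_zero.1 (by
        simpa [ContinuousLinearMap.sub_apply, ContinuousLinearMap.smul_apply,
          ContinuousLinearMap.flip_apply] using this)
      exact this
    -- membership of the derivative of T1 in S
    have hT1mem : ∀ y ∈ K, iteratedFDeriv ℝ (m+1) f y ∈ S := by
      intro y hy
      obtain ⟨c, hc⟩ := IH' y hy
      rw [hSdef, Submodule.restrictScalars_mem, Submodule.mem_span_singleton]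
      exact ⟨c, hc.symm⟩
    have hDT1 : ∀ a : ℂ, fderiv ℝ (iteratedFDeriv ℝ (m+1) f) x a ∈ S :=
      dir_span K hx (hdir x hx) hT1diff S hSclosed hT1mem
    -- the scalar function d
    set d : ℂ → ℂ := fun a => fderiv ℝ (iteratedFDeriv ℝ (m+1) f) x a (fun _ => 1) with hddef
    have hform : ∀ a : ℂ, fderiv ℝ (iteratedFDeriv ℝ (m+1) f) x a = d a • P := by
      intro a
      obtain ⟨r, hr⟩ := Submodule.mem_span_singleton.1
        ((Submodule.restrictScalars_mem _ _ _).1 (hDT1 a))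
      have hra : r = d a := by
        rw [hddef]
        simp only [← hr, ContinuousMultilinearMap.smul_apply, hP, mkPiAlgebraFin_apply']
        simp
      rw [← hra, ← hr]
    -- computing d via the second derivative of Tm
    have hcomp := LinearIsometryEquiv.comp_fderiv (𝕜 := ℝ) (continuousMultilinearCurryLeftEquiv ℝ
        (fun _ : Fin (m+1) => ℂ) ℂ).symm
      (f := fderiv ℝ (iteratedFDeriv ℝ m f)) (x := x)
    rw [← iteratedFDeriv_succ_eq_comp_left] at hcomp
    have hda : ∀ a : ℂ, d a
        = fderiv ℝ (fderiv ℝ (iteratedFDeriv ℝ m f)) x a 1 (fun _ : Fin m => 1) := by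
      intro a
      rw [hddef]
      simp only [hcomp]
      simp [continuousMultilinearCurryLeftEquiv_symm_apply]
      rfl
    have hdI : d Complex.I = Complex.I * d 1 := by
      rw [hda, hda]
      rw [hsymm.eq Complex.I 1, hstar 1]
      simp
    have hdlin : ∀ a : ℂ, d a = a * d 1 := by
      intro a
      have hre : ((a.re : ℝ) • (1:ℂ) + (a.im : ℝ) • Complex.I) = a := by
        simp [Complex.real_smul, Complex.re_add_im]
      have e : fderiv ℝ (iteratedFDeriv ℝ (m+1) f) x a
          = (a.re : ℝ) • fderiv ℝ (iteratedFDeriv ℝ (m+1) f) x 1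
            + (a.im : ℝ) • fderiv ℝ (iteratedFDeriv ℝ (m+1) f) x Complex.I := by
        conv_lhs => rw [← hre]
        rw [map_add, map_smul, map_smul]
      have e2 : d a = (a.re : ℝ) • d 1 + (a.im : ℝ) • d Complex.I := by
        show (fderiv ℝ (iteratedFDeriv ℝ (m+1) f) x a) (fun _ => 1)
            = (a.re : ℝ) • (fderiv ℝ (iteratedFDeriv ℝ (m+1) f) x 1) (fun _ => 1)
              + (a.im : ℝ) • (fderiv ℝ (iteratedFDeriv ℝ (m+1) f) x Complex.I) (fun _ => 1)
        rw [e]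
        simp only [ContinuousMultilinearMap.add_apply, ContinuousMultilinearMap.smul_apply]
      rw [e2, hdI, Complex.real_smul, Complex.real_smul]
      calc (a.re : ℂ) * d 1 + (a.im : ℂ) * (Complex.I * d 1)
          = ((a.re : ℂ) + (a.im : ℂ) * Complex.I) * d 1 := by ring
        _ = a * d 1 := by rw [Complex.re_add_im]
    -- conclusion
    refine ⟨d 1, ?_⟩
    ext w
    rw [iteratedFDeriv_succ_apply_left, hform (w 0)]
    simp only [ContinuousMultilinearMap.smul_apply, hP, mkPiAlgebraFin_apply', smul_eq_mul]
    rw [hdlin (w 0)]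
    rw [Fin.prod_univ_succ]
    have : ∀ i : Fin (m+1), Fin.tail w i = w i.succ := fun i => rfl
    simp only [this]
    rw [Fin.prod_univ_succ, Fin.prod_univ_succ]
    ring
end
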